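/- arXiv:2104.08938 — 4 statements merged into one kernel-verified Lean document; each statement's English description precedes it below -/
import Mathlib

section
/- For every n ∈ ℕ, the (2n−1)-th derivative of the hyperbolic tangent function at 0 satisfies |tanh^{(2n−1)}(0)| ≥ 1. -/
open Real Finset

lemma tanh_contDiff : ContDiff ℝ ⊤ Real.tanh := by
  have h : Real.tanh = fun x => Real.sinh x / Real.cosh x := funext Real.tanh_eq_sinh_div_cosh
  rw [h]
  exact Real.contDiff_sinh.div Real.contDiff_cosh (fun x => (Real.cosh_pos x).ne')

lemma tanh_hasDerivAt (x : ℝ) : HasDerivAt Real.tanh (1 - Real.tanh x ^ 2) x := by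
  have h : Real.tanh = fun x => Real.sinh x / Real.cosh x := funext Real.tanh_eq_sinh_div_cosh
  have hc := (Real.cosh_pos x).ne'
  have := (Real.hasDerivAt_sinh x).fun_div (Real.hasDerivAt_cosh x) hc
  rw [h]
  refine this.congr_deriv ?_
  have hid := Real.cosh_sq_sub_sinh_sq x
  beta_reduce
  field_simp

lemma deriv_tanh' : deriv Real.tanh = fun x => 1 - Real.tanh x ^ 2 :=
  funext fun x => (tanh_hasDerivAt x).deriv
open Finset

lemma iteratedDeriv_mul' {f g : ℝ → ℝ} (hf : ContDiff ℝ ⊤ f) (hg : ContDiff ℝ ⊤ g) (n : ℕ) :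
    iteratedDeriv n (fun y => f y * g y) = fun x =>
      ∑ k ∈ range (n + 1), (n.choose k : ℝ) * iteratedDeriv k f x * iteratedDeriv (n - k) g x := by
  have hdf : ∀ k, Differentiable ℝ (iteratedDeriv k f) := fun k =>
    hf.differentiable_iteratedDeriv k (by simp)
  have hdg : ∀ k, Differentiable ℝ (iteratedDeriv k g) := fun k =>
    hg.differentiable_iteratedDeriv k (by simp)
  induction n with
  | zero => simp
  | succ n ih =>
    funext x
    rw [iteratedDeriv_succ, ih]
    have hterm : ∀ k ∈ range (n + 1), DifferentiableAt ℝ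
        (fun x => (n.choose k : ℝ) * iteratedDeriv k f x * iteratedDeriv (n - k) g x) x :=
      fun k _ => (((hdf k).const_mul _).mul (hdg (n - k))).differentiableAt
    rw [deriv_fun_sum hterm]
    have hder : ∀ k ∈ range (n + 1),
        deriv (fun x => (n.choose k : ℝ) * iteratedDeriv k f x * iteratedDeriv (n - k) g x) x
          = (n.choose k : ℝ) * iteratedDeriv (k + 1) f x * iteratedDeriv (n - k) g x
          + (n.choose k : ℝ) * iteratedDeriv k f x * iteratedDeriv (n - k + 1) g x := by
      intro k _
      rw [deriv_fun_mul (((hdf k).const_mul _).differentiableAt) ((hdg (n - k)).differentiableAt),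
        deriv_const_mul _ ((hdf k).differentiableAt), iteratedDeriv_succ, iteratedDeriv_succ]
      try ring
    rw [sum_congr rfl hder, sum_add_distrib]
    -- now the combinatorial identity
    have key : ∀ k ∈ range (n + 1), n - k + 1 = n + 1 - k := fun k hk => by
      have := mem_range.mp hk; omega
    have e2 : ∑ k ∈ range (n + 1), (n.choose k : ℝ) * iteratedDeriv k f x
          * iteratedDeriv (n - k + 1) g x
        = ∑ k ∈ range (n + 1), (n.choose k : ℝ) * iteratedDeriv k f x
          * iteratedDeriv (n + 1 - k) g x := by
      refine sum_congr rfl fun k hk => by rw [key k hk]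
    rw [e2]
    -- RHS: split
    rw [sum_range_succ' (fun k => ((n+1).choose k : ℝ) * iteratedDeriv k f x
      * iteratedDeriv (n + 1 - k) g x) (n + 1)]
    have e3 : ∀ k ∈ range (n + 1), (((n+1).choose (k+1) : ℝ)) * iteratedDeriv (k+1) f x
          * iteratedDeriv (n + 1 - (k+1)) g x
        = (n.choose k : ℝ) * iteratedDeriv (k+1) f x * iteratedDeriv (n - k) g x
        + (n.choose (k+1) : ℝ) * iteratedDeriv (k+1) f x * iteratedDeriv (n - k) g x := by
      intro k hk
      have h1 : (n+1).choose (k+1) = n.choose k + n.choose (k+1) := Nat.choose_succ_succ n k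
      have h2 : n + 1 - (k + 1) = n - k := by omega
      rw [h1, h2]
      push_cast
      ring
    rw [sum_congr rfl e3, sum_add_distrib]
    have e4 : ∑ k ∈ range (n + 1), (n.choose (k+1) : ℝ) * iteratedDeriv (k+1) f x
          * iteratedDeriv (n - k) g x
        = ∑ k ∈ range (n + 1), (n.choose k : ℝ) * iteratedDeriv k f x
          * iteratedDeriv (n + 1 - k) g x - (n.choose 0 : ℝ) * iteratedDeriv 0 f x
          * iteratedDeriv (n + 1) g x := by
      have := sum_range_succ' (fun k => (n.choose k : ℝ) * iteratedDeriv k f x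
        * iteratedDeriv (n + 1 - k) g x) n
      have e5 : ∀ k ∈ range n, (n.choose (k+1) : ℝ) * iteratedDeriv (k+1) f x
            * iteratedDeriv (n + 1 - (k+1)) g x
          = (n.choose (k+1) : ℝ) * iteratedDeriv (k+1) f x * iteratedDeriv (n - k) g x := by
        intro k hk; congr 2; omega
      rw [sum_range_succ (fun k => (n.choose (k+1) : ℝ) * iteratedDeriv (k+1) f x
        * iteratedDeriv (n - k) g x) n]
      rw [Nat.choose_succ_self]
      push_cast
      rw [sum_congr rfl e5] at this
      rw [this, Nat.sub_zero]
      ring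
    rw [e4]
    simp [Nat.choose_zero_right]
    ring

open Real

lemma tanh_even_deriv_zero (k : ℕ) : iteratedDeriv (2 * k) Real.tanh 0 = 0 := by
  have h := iteratedDeriv_comp_neg (2 * k) Real.tanh 0
  have h2 : (fun x : ℝ => Real.tanh (-x)) = fun x => -Real.tanh x := by
    funext x; exact Real.tanh_neg x
  rw [h2] at h
  rw [iteratedDeriv_fun_neg] at h
  simp [pow_mul] at h
  linarith

lemma tanh_deriv_one : iteratedDeriv 1 Real.tanh 0 = 1 := by
  rw [iteratedDeriv_one, deriv_tanh']
  simp [Real.tanh_zero]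

lemma tanh_deriv_rec (m : ℕ) (hm : 0 < m) :
    iteratedDeriv (m + 1) Real.tanh 0 = -∑ k ∈ range (m + 1),
      (m.choose k : ℝ) * iteratedDeriv k Real.tanh 0 * iteratedDeriv (m - k) Real.tanh 0 := by
  rw [iteratedDeriv_succ', deriv_tanh']
  have h1 : iteratedDeriv m (fun y => 1 - Real.tanh y ^ 2) 0
      = -iteratedDeriv m (fun y => Real.tanh y ^ 2) 0 := by
    rw [← iteratedDerivWithin_univ]
    rw [iteratedDerivWithin_const_sub hm 1]
    rw [iteratedDerivWithin_fun_neg]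
    rw [iteratedDerivWithin_univ]
  rw [h1]
  have h2 : (fun y => Real.tanh y ^ 2) = fun y => Real.tanh y * Real.tanh y := by
    funext y; ring
  rw [h2, iteratedDeriv_mul' tanh_contDiff tanh_contDiff m]

lemma tanh_odd_deriv_sign : ∀ n : ℕ, 1 ≤ (-1 : ℝ) ^ n * iteratedDeriv (2 * n + 1) Real.tanh 0 := by
  intro n
  induction n using Nat.strong_induction_on with
  | _ n IH =>
    match n with
    | 0 => simpa using tanh_deriv_one.ge
    | (m + 1) =>
      have hrec := tanh_deriv_rec (2 * m + 2) (by omega)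
      have hidx : 2 * (m + 1) + 1 = 2 * m + 2 + 1 := by ring
      rw [hidx, hrec]
      set A : ℕ → ℝ := fun k => iteratedDeriv k Real.tanh 0 with hA
      have key : (-1 : ℝ) ^ (m + 1) * -∑ k ∈ range (2 * m + 2 + 1),
            ((2 * m + 2).choose k : ℝ) * A k * A (2 * m + 2 - k)
          = ∑ k ∈ range (2 * m + 2 + 1),
            (-1 : ℝ) ^ m * (((2 * m + 2).choose k : ℝ) * A k * A (2 * m + 2 - k)) := by
        have h0 : (-1 : ℝ) ^ (m + 1) * -∑ k ∈ range (2 * m + 2 + 1),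
            ((2 * m + 2).choose k : ℝ) * A k * A (2 * m + 2 - k)
            = (-1 : ℝ) ^ m * ∑ k ∈ range (2 * m + 2 + 1),
            ((2 * m + 2).choose k : ℝ) * A k * A (2 * m + 2 - k) := by
          rw [pow_succ]; ring
        rw [h0, mul_sum]
      rw [key]
      have hnonneg : ∀ k ∈ range (2 * m + 2 + 1),
          0 ≤ (-1 : ℝ) ^ m * (((2 * m + 2).choose k : ℝ) * A k * A (2 * m + 2 - k)) := by
        intro k hk
        rcases Nat.even_or_odd k with he | ho
        · obtain ⟨i, hi⟩ := he
          have hz : A k = 0 := by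
            have : k = 2 * i := by omega
            rw [this]; exact tanh_even_deriv_zero i
          rw [hz]; simp
        · obtain ⟨i, hi⟩ := ho
          have hk' : k < 2 * m + 2 + 1 := mem_range.mp hk
          have him : i ≤ m := by omega
          have hu := IH i (by omega)
          have hv := IH (m - i) (by omega)
          have hsub : 2 * m + 2 - k = 2 * (m - i) + 1 := by omega
          have hksub : k = 2 * i + 1 := by omega
          rw [hsub, hksub]
          have hsign : ((-1 : ℝ)) ^ m = (-1 : ℝ) ^ i * (-1 : ℝ) ^ (m - i) := by
            rw [← pow_add]; congr 1; omega
          rw [hsign]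
          have hc : (0 : ℝ) ≤ (((2 * m + 2).choose (2 * i + 1) : ℕ) : ℝ) := Nat.cast_nonneg _
          have h1 : 0 ≤ (((-1 : ℝ) ^ i * A (2 * i + 1)) * ((-1 : ℝ) ^ (m - i) * A (2 * (m - i) + 1)))
              * (((2 * m + 2).choose (2 * i + 1) : ℕ) : ℝ) :=
            mul_nonneg (mul_nonneg (by linarith) (by linarith)) hc
          have h2 : (-1 : ℝ) ^ i * (-1 : ℝ) ^ (m - i) * ((((2 * m + 2).choose (2 * i + 1) : ℕ) : ℝ)
                * A (2 * i + 1) * A (2 * (m - i) + 1))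
              = (((-1 : ℝ) ^ i * A (2 * i + 1)) * ((-1 : ℝ) ^ (m - i) * A (2 * (m - i) + 1)))
              * (((2 * m + 2).choose (2 * i + 1) : ℕ) : ℝ) := by ring
          rw [h2]
          exact h1
      have h1mem : (1 : ℕ) ∈ range (2 * m + 2 + 1) := by simp
      have hg1 : 1 ≤ (-1 : ℝ) ^ m * (((2 * m + 2).choose 1 : ℝ) * A 1 * A (2 * m + 2 - 1)) := by
        have hA1 : A 1 = 1 := tanh_deriv_one
        have hsub : 2 * m + 2 - 1 = 2 * m + 1 := by omega
        have hv := IH m (by omega)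
        rw [hA1, hsub, Nat.choose_one_right]
        push_cast
        nlinarith [hv]
      exact le_trans hg1 (single_le_sum hnonneg h1mem)

/-- **Lemma A.1.** For every `n ≥ 1`, the `(2n-1)`-th derivative of `tanh` at `0` has
absolute value at least `1`. -/
theorem abs_iteratedDeriv_tanh_zero_ge_one (n : ℕ) (hn : 1 ≤ n) :
    1 ≤ |iteratedDeriv (2 * n - 1) Real.tanh 0| := by
  have hidx : 2 * n - 1 = 2 * (n - 1) + 1 := by omega
  rw [hidx]
  have h := tanh_odd_deriv_sign (n - 1)
  calc (1 : ℝ) ≤ (-1 : ℝ) ^ (n - 1) * iteratedDeriv (2 * (n - 1) + 1) Real.tanh 0 := h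
    _ ≤ |(-1 : ℝ) ^ (n - 1) * iteratedDeriv (2 * (n - 1) + 1) Real.tanh 0| := le_abs_self _
    _ = |iteratedDeriv (2 * (n - 1) + 1) Real.tanh 0| := by
        rw [abs_mul, abs_pow, abs_neg, abs_one, one_pow, one_mul]
end

section
/- Let n, q ∈ ℕ and let P_{n,q} = {α ∈ ℕ₀^q : |α| = n}. Define the Dyson matrix D, with rows and columns indexed by P_{n,q}, by D_{α,β} = (n!/(β₁!⋯β_q!)) · (α₁^{β₁}⋯α_q^{β_q}) / n^n for α, β ∈ P_{n,q}. Then D is invertible and its operator norm on ℓ^∞ (the maximum over rows of the sum of absolute values of the entries of D^{−1}) satisfies ‖D^{−1}‖_∞ ≤ (n!)³ |P_{n,q}|² 2^n. -/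
open Finset

/-- The Dyson matrix `D_{α,β} = (n choose β) α^β / n^n`, with rows and columns indexed by
the multi-indices `β ∈ ℕ₀^q` with `|β| = n`. -/
noncomputable def dysonMatrix (n q : ℕ) :
    Matrix ↥(Finset.Nat.antidiagonalTuple q n) ↥(Finset.Nat.antidiagonalTuple q n) ℝ :=
  fun α β =>
    (Nat.multinomial Finset.univ (β : Fin q → ℕ) : ℝ) *
      (∏ i, ((α : Fin q → ℕ) i : ℝ) ^ ((β : Fin q → ℕ) i)) / (n : ℝ) ^ n

namespace DysonAux
variable {q : ℕ}

def Fa (α : Fin q → ℕ) : Finset ((_ : Fin q) × ℕ) :=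
  Finset.univ.sigma fun i => Finset.range (α i)

noncomputable def aco (n : ℕ) (t : (_ : Fin q) × ℕ) (k : Fin q) : ℝ :=
  (if k = t.1 then (n : ℝ) else 0) - (t.2 : ℝ)

def mono {α : Fin q → ℕ} (g : ↥(Fa α) → Fin q) : Fin q → ℕ :=
  fun k => (Finset.univ.filter fun t => g t = k).card

noncomputable def w (n : ℕ) {α : Fin q → ℕ} (g : ↥(Fa α) → Fin q) : ℝ :=
  ∏ t, aco n t.1 (g t)

noncomputable def c (n : ℕ) (α γ : Fin q → ℕ) : ℝ :=
  ∑ g : ↥(Fa α) → Fin q, if mono g = γ then w n g else 0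

lemma card_Fa' (α : Fin q → ℕ) : (Fa α).card = ∑ i, α i := by
  simp [Fa, Finset.card_sigma]

lemma mem_Fa_snd_lt {α : Fin q → ℕ} {t : (_ : Fin q) × ℕ} (ht : t ∈ Fa α) : t.2 < α t.1 := by
  simpa [Fa, Finset.mem_sigma] using ht

lemma abs_aco_le (n : ℕ) (t : (_ : Fin q) × ℕ) (ht : t.2 ≤ n) (k : Fin q) :
    |aco n t k| ≤ (n : ℝ) := by
  have h2 : (t.2 : ℝ) ≤ (n : ℝ) := by exact_mod_cast ht
  have h0 : (0 : ℝ) ≤ (t.2 : ℝ) := by positivity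
  unfold aco
  split
  · rw [abs_of_nonneg (by linarith)]; linarith
  · rw [zero_sub, abs_neg, abs_of_nonneg h0]; exact h2

lemma sum_abs_aco_le (n : ℕ) (t : (_ : Fin q) × ℕ) (ht : t.2 ≤ n) :
    ∑ k, |aco n t k| ≤ (q : ℝ) * n := by
  calc ∑ k, |aco n t k| ≤ ∑ _k : Fin q, (n : ℝ) :=
        Finset.sum_le_sum fun k _ => abs_aco_le n t ht k
    _ = (q : ℝ) * n := by simp [Finset.sum_const, mul_comm]

lemma abs_c_le (n : ℕ) (α γ : Fin q → ℕ) (hα : ∑ i, α i = n) :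
    |c n α γ| ≤ ((q : ℝ) * n) ^ n := by
  classical
  have ht2 : ∀ t : ↥(Fa α), (t : (_ : Fin q) × ℕ).2 ≤ n := by
    intro t
    have h1 := mem_Fa_snd_lt t.2
    have h2 : α (t : (_ : Fin q) × ℕ).1 ≤ ∑ i, α i :=
      Finset.single_le_sum (fun i _ => Nat.zero_le _) (Finset.mem_univ _)
    omega
  calc |c n α γ| ≤ ∑ g : ↥(Fa α) → Fin q, |if mono g = γ then w n g else 0| :=
        Finset.abs_sum_le_sum_abs _ _
    _ ≤ ∑ g : ↥(Fa α) → Fin q, ∏ t : ↥(Fa α), |aco n t.1 (g t)| := by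
        refine Finset.sum_le_sum fun g _ => ?_
        split
        · rw [w, Finset.abs_prod]
        · rw [abs_zero]
          positivity
    _ = ∏ t : ↥(Fa α), ∑ k, |aco n t.1 k| :=
        (Fintype.prod_sum (fun (t : ↥(Fa α)) (k : Fin q) => |aco n t.1 k|)).symm
    _ ≤ ∏ _t : ↥(Fa α), ((q : ℝ) * n) := by
        refine Finset.prod_le_prod (fun t _ => ?_) (fun t _ => sum_abs_aco_le n t.1 (ht2 t))
        positivity
    _ = ((q : ℝ) * n) ^ n := by
        rw [Finset.prod_const, Finset.card_univ, Fintype.card_coe, card_Fa', hα]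

lemma sum_mono {α : Fin q → ℕ} (g : ↥(Fa α) → Fin q) : ∑ k, mono g k = ∑ i, α i := by
  classical
  have h := Finset.card_eq_sum_card_fiberwise
    (f := g) (s := Finset.univ) (t := Finset.univ) (fun x _ => Finset.mem_univ _)
  have hcard : (Finset.univ : Finset ↥(Fa α)).card = ∑ i, α i := by
    rw [Finset.card_univ, Fintype.card_coe, card_Fa']
  rw [← hcard, h]
  rfl

lemma prod_mono {α : Fin q → ℕ} (g : ↥(Fa α) → Fin q) (x : Fin q → ℝ) :
    ∏ t, x (g t) = ∏ k, x k ^ mono g k := by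
  classical
  rw [← Finset.prod_fiberwise_of_maps_to (g := g) (t := Finset.univ)
    (fun t _ => Finset.mem_univ (g t)) (fun t => x (g t))]
  refine Finset.prod_congr rfl fun k _ => ?_
  rw [mono]
  rw [← Finset.prod_const]
  refine Finset.prod_congr rfl fun t ht => ?_
  rw [(Finset.mem_filter.mp ht).2]

lemma sum_aco (n : ℕ) (t : (_ : Fin q) × ℕ) (β : Fin q → ℕ) (hβ : ∑ i, β i = n) :
    ∑ k, aco n t k * (β k : ℝ) = n * ((β t.1 : ℝ) - t.2) := by
  have hcast : ∑ k, (β k : ℝ) = (n : ℝ) := by exact_mod_cast congrArg (Nat.cast : ℕ → ℝ) hβ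
  simp only [aco, sub_mul, Finset.sum_sub_distrib, ite_mul, zero_mul]
  rw [Finset.sum_ite_eq' Finset.univ t.1 (fun k => (n : ℝ) * (β k : ℝ))]
  rw [← Finset.mul_sum, hcast]
  simp only [Finset.mem_univ, if_true]
  ring

lemma castDesc (b k : ℕ) : ∏ j ∈ Finset.range k, ((b : ℝ) - j) = (Nat.descFactorial b k : ℝ) := by
  rcases lt_or_ge b k with h | h
  · rw [Nat.descFactorial_eq_zero_iff_lt.mpr h, Nat.cast_zero]
    exact Finset.prod_eq_zero (Finset.mem_range.mpr h) (by simp)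
  · rw [Nat.descFactorial_eq_prod_range, Nat.cast_prod]
    refine Finset.prod_congr rfl fun j hj => ?_
    have hj' : j ≤ b := le_trans (le_of_lt (Finset.mem_range.mp hj)) h
    rw [Nat.cast_sub hj']

lemma desc_delta {α β : Fin q → ℕ} (h : ∑ i, α i = ∑ i, β i) :
    ∏ i, Nat.descFactorial (β i) (α i) = if α = β then ∏ i, (α i).factorial else 0 := by
  by_cases hab : α = β
  · subst hab
    simp [Nat.descFactorial_self]
  · rw [if_neg hab]
    by_cases hle : ∀ i, α i ≤ β i
    · exfalso
      apply hab
      funext i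
      exact (Finset.sum_eq_sum_iff_of_le (fun i _ => hle i)).mp h i (Finset.mem_univ i)
    · push_neg at hle
      obtain ⟨i, hi⟩ := hle
      exact Finset.prod_eq_zero (Finset.mem_univ i) (Nat.descFactorial_eq_zero_iff_lt.mpr hi)

set_option maxHeartbeats 1000000 in
lemma key' (n : ℕ) (α β : Fin q → ℕ) (hα : ∑ i, α i = n) (hβ : ∑ i, β i = n) :
    ∑ γ ∈ Finset.Nat.antidiagonalTuple q n, (∏ i, (β i : ℝ) ^ γ i) * c n α γ
      = (n : ℝ) ^ n * (if α = β then ∏ i, ((α i).factorial : ℝ) else 0) := by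
  classical
  have hmem : ∀ g : ↥(Fa α) → Fin q, mono g ∈ Finset.Nat.antidiagonalTuple q n := by
    intro g
    rw [Finset.Nat.mem_antidiagonalTuple, sum_mono, hα]
  calc
    ∑ γ ∈ Finset.Nat.antidiagonalTuple q n, (∏ i, (β i : ℝ) ^ γ i) * c n α γ
        = ∑ γ ∈ Finset.Nat.antidiagonalTuple q n, ∑ g : ↥(Fa α) → Fin q,
            if mono g = γ then (∏ i, (β i : ℝ) ^ γ i) * w n g else 0 := by
          refine Finset.sum_congr rfl fun γ _ => ?_
          rw [c, Finset.mul_sum]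
          exact Finset.sum_congr rfl fun g _ => by rw [mul_ite, mul_zero]
    _ = ∑ g : ↥(Fa α) → Fin q, ∑ γ ∈ Finset.Nat.antidiagonalTuple q n,
            if mono g = γ then (∏ i, (β i : ℝ) ^ γ i) * w n g else 0 := Finset.sum_comm
    _ = ∑ g : ↥(Fa α) → Fin q, (∏ i, (β i : ℝ) ^ mono g i) * w n g := by
          refine Finset.sum_congr rfl fun g _ => ?_
          rw [Finset.sum_ite_eq (Finset.Nat.antidiagonalTuple q n) (mono g)
            (fun γ => (∏ i, (β i : ℝ) ^ γ i) * w n g), if_pos (hmem g)]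
    _ = ∑ g : ↥(Fa α) → Fin q, ∏ t : ↥(Fa α), (aco n t.1 (g t) * (β (g t) : ℝ)) := by
          refine Finset.sum_congr rfl fun g _ => ?_
          rw [← prod_mono g (fun k => (β k : ℝ)), w, ← Finset.prod_mul_distrib]
          exact Finset.prod_congr rfl fun t _ => mul_comm _ _
    _ = ∏ t : ↥(Fa α), ∑ k, aco n t.1 k * (β k : ℝ) := (Fintype.prod_sum (fun (t : ↥(Fa α)) (k : Fin q) => aco n t.1 k * (β k : ℝ))).symm
    _ = ∏ t : ↥(Fa α), ((n : ℝ) * ((β (t : (_ : Fin q) × ℕ).1 : ℝ) - ((t : (_ : Fin q) × ℕ).2 : ℝ))) := by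
          exact Finset.prod_congr rfl fun t _ => sum_aco n t.1 β hβ
    _ = (n : ℝ) ^ n * ∏ i, (Nat.descFactorial (β i) (α i) : ℝ) := by
          rw [Finset.prod_mul_distrib, Finset.prod_const]
          congr 1
          · rw [Finset.card_univ, Fintype.card_coe, card_Fa', hα]
          · rw [Finset.prod_coe_sort (Fa α)
              (fun t => ((β t.1 : ℝ) - (t.2 : ℝ)))]
            rw [Fa, Finset.prod_sigma]
            exact Finset.prod_congr rfl fun i _ => castDesc (β i) (α i)
    _ = (n : ℝ) ^ n * (if α = β then ∏ i, ((α i).factorial : ℝ) else 0) := by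
          rw [← Nat.cast_prod, desc_delta (by rw [hα, hβ]), apply_ite (Nat.cast : ℕ → ℝ),
            Nat.cast_prod, Nat.cast_zero]

lemma pow_le_factorial_sq (n : ℕ) : n ^ n ≤ n.factorial * n.factorial := by
  have h1 : ∏ i ∈ Finset.range n, (i + 1) = n.factorial :=
    Finset.prod_range_add_one_eq_factorial n
  have h2 : ∏ i ∈ Finset.range n, (n - i) = n.factorial := by
    rw [← h1, ← Finset.prod_range_reflect (fun j => j + 1) n]
    refine Finset.prod_congr rfl fun j hj => ?_
    have := Finset.mem_range.mp hj
    omega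
  calc n ^ n = ∏ _i ∈ Finset.range n, n := by rw [Finset.prod_const, Finset.card_range]
    _ ≤ ∏ i ∈ Finset.range n, (i + 1) * (n - i) := by
        refine Finset.prod_le_prod' fun i hi => ?_
        have hi' := Finset.mem_range.mp hi
        have hm : 1 ≤ n - i := by omega
        calc n = i + (n - i) := by omega
          _ ≤ i * (n - i) + (n - i) := by
              exact Nat.add_le_add_right (Nat.le_mul_of_pos_right i (by omega)) _
          _ = (i + 1) * (n - i) := by ring
    _ = n.factorial * n.factorial := by rw [Finset.prod_mul_distrib, h1, h2]

lemma pow_le_factorial_mul_card (n q : ℕ) :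
    q ^ n ≤ n.factorial * (Finset.Nat.antidiagonalTuple q n).card := by
  classical
  have h := Finset.sum_pow_eq_sum_piAntidiag (Finset.univ : Finset (Fin q)) (fun _ => (1 : ℕ)) n
  rw [Finset.piAntidiag_univ_fin_eq_antidiagonalTuple] at h
  have hq : (∑ _i : Fin q, (1 : ℕ)) = q := by simp
  rw [hq] at h
  have h' : q ^ n = ∑ k ∈ Finset.Nat.antidiagonalTuple q n, Nat.multinomial Finset.univ k := by
    rw [h]
    exact Finset.sum_congr rfl fun k _ => by simp
  rw [h']
  calc ∑ k ∈ Finset.Nat.antidiagonalTuple q n, Nat.multinomial Finset.univ k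
      ≤ ∑ _k ∈ Finset.Nat.antidiagonalTuple q n, n.factorial := by
        refine Finset.sum_le_sum fun k hk => ?_
        have hsum : ∑ i, k i = n := Finset.Nat.mem_antidiagonalTuple.mp hk
        have hspec := Nat.multinomial_spec Finset.univ k
        rw [hsum] at hspec
        calc Nat.multinomial Finset.univ k
            ≤ (∏ i, (k i).factorial) * Nat.multinomial Finset.univ k :=
              Nat.le_mul_of_pos_left _ (Finset.prod_pos fun i _ => Nat.factorial_pos _)
          _ = n.factorial := hspec
    _ = n.factorial * (Finset.Nat.antidiagonalTuple q n).card := by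
        rw [Finset.sum_const, smul_eq_mul, mul_comm]

noncomputable def Dinv (n q : ℕ) :
    Matrix ↥(Finset.Nat.antidiagonalTuple q n) ↥(Finset.Nat.antidiagonalTuple q n) ℝ :=
  fun γ α => c n (α : Fin q → ℕ) (γ : Fin q → ℕ) /
    ((Nat.multinomial Finset.univ (γ : Fin q → ℕ) : ℝ) *
      ∏ i, (((α : Fin q → ℕ) i).factorial : ℝ))

end DysonAux

set_option maxHeartbeats 1600000 in
/-- **Lemma A.3.** The Dyson matrix `D` is invertible and its inverse satisfies
`‖D⁻¹‖_∞ ≤ (n!)³ |P_{n,q}|² 2^n`, where `‖·‖_∞` is the maximum over rows of the sum of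
absolute values of the entries. -/
theorem dysonMatrix_invertible_and_inv_bound (n q : ℕ) (hn : 1 ≤ n) (hq : 1 ≤ q) :
    ∃ Dinv : Matrix ↥(Finset.Nat.antidiagonalTuple q n)
        ↥(Finset.Nat.antidiagonalTuple q n) ℝ,
      dysonMatrix n q * Dinv = 1 ∧ Dinv * dysonMatrix n q = 1 ∧
      ∀ α, ∑ β, |Dinv α β| ≤
        ((Nat.factorial n : ℝ)) ^ 3 * ((Finset.Nat.antidiagonalTuple q n).card : ℝ) ^ 2
          * 2 ^ n := by
  classical
  have hn0 : (0 : ℝ) < (n : ℝ) ^ n := by positivity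
  have hmul : dysonMatrix n q * DysonAux.Dinv n q = 1 := by
    ext β α
    rw [Matrix.mul_apply, Matrix.one_apply]
    have hβ : ∑ i, (β : Fin q → ℕ) i = n := Finset.Nat.mem_antidiagonalTuple.mp β.2
    have hα : ∑ i, (α : Fin q → ℕ) i = n := Finset.Nat.mem_antidiagonalTuple.mp α.2
    have hF : (0 : ℝ) < ∏ i, ((((α : Fin q → ℕ)) i).factorial : ℝ) := by positivity
    have hterm : ∀ γ : ↥(Finset.Nat.antidiagonalTuple q n),
        dysonMatrix n q β γ * DysonAux.Dinv n q γ α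
          = (∏ i, ((β : Fin q → ℕ) i : ℝ) ^ (γ : Fin q → ℕ) i) *
              DysonAux.c n (α : Fin q → ℕ) (γ : Fin q → ℕ) /
            ((n : ℝ) ^ n * ∏ i, (((α : Fin q → ℕ) i).factorial : ℝ)) := by
      intro γ
      have hm : (Nat.multinomial Finset.univ (γ : Fin q → ℕ) : ℝ) ≠ 0 := by
        exact_mod_cast (Nat.multinomial_pos _ _).ne'
      rw [dysonMatrix, DysonAux.Dinv]
      field_simp
    calc ∑ γ : ↥(Finset.Nat.antidiagonalTuple q n),
            dysonMatrix n q β γ * DysonAux.Dinv n q γ α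
        = ∑ γ : ↥(Finset.Nat.antidiagonalTuple q n),
            (∏ i, ((β : Fin q → ℕ) i : ℝ) ^ (γ : Fin q → ℕ) i) *
              DysonAux.c n (α : Fin q → ℕ) (γ : Fin q → ℕ) /
            ((n : ℝ) ^ n * ∏ i, (((α : Fin q → ℕ) i).factorial : ℝ)) :=
          Finset.sum_congr rfl fun γ _ => hterm γ
      _ = (∑ γ ∈ Finset.Nat.antidiagonalTuple q n,
            (∏ i, ((β : Fin q → ℕ) i : ℝ) ^ γ i) * DysonAux.c n (α : Fin q → ℕ) γ) /
            ((n : ℝ) ^ n * ∏ i, (((α : Fin q → ℕ) i).factorial : ℝ)) := by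
          rw [← Finset.sum_div]
          congr 1
          exact Finset.sum_coe_sort (Finset.Nat.antidiagonalTuple q n)
            (fun γ => (∏ i, ((β : Fin q → ℕ) i : ℝ) ^ γ i) * DysonAux.c n (α : Fin q → ℕ) γ)
      _ = ((n : ℝ) ^ n * (if (α : Fin q → ℕ) = (β : Fin q → ℕ) then
              ∏ i, ((((α : Fin q → ℕ)) i).factorial : ℝ) else 0)) /
            ((n : ℝ) ^ n * ∏ i, (((α : Fin q → ℕ) i).factorial : ℝ)) := by
          rw [DysonAux.key' n (α : Fin q → ℕ) (β : Fin q → ℕ) hα hβ]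
      _ = if β = α then 1 else 0 := by
          by_cases h : β = α
          · rw [if_pos h, if_pos (by rw [h]), div_self (ne_of_gt (mul_pos hn0 hF))]
          · rw [if_neg (fun hc => h (Subtype.ext hc).symm), if_neg h, mul_zero, zero_div]
  refine ⟨DysonAux.Dinv n q, hmul, mul_eq_one_comm.mp hmul, ?_⟩
  intro r
  have hr : ∑ i, (r : Fin q → ℕ) i = n := Finset.Nat.mem_antidiagonalTuple.mp r.2
  have hnat : (Finset.Nat.antidiagonalTuple q n).card * (q * n) ^ n ≤
      n.factorial ^ 3 * (Finset.Nat.antidiagonalTuple q n).card ^ 2 * 2 ^ n := by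
    calc (Finset.Nat.antidiagonalTuple q n).card * (q * n) ^ n
        = (Finset.Nat.antidiagonalTuple q n).card * (q ^ n * n ^ n) := by rw [mul_pow]
      _ ≤ (Finset.Nat.antidiagonalTuple q n).card *
            ((n.factorial * (Finset.Nat.antidiagonalTuple q n).card) *
              (n.factorial * n.factorial)) :=
          Nat.mul_le_mul_left _ (Nat.mul_le_mul (DysonAux.pow_le_factorial_mul_card n q)
            (DysonAux.pow_le_factorial_sq n))
      _ = n.factorial ^ 3 * (Finset.Nat.antidiagonalTuple q n).card ^ 2 * 1 := by ring
      _ ≤ n.factorial ^ 3 * (Finset.Nat.antidiagonalTuple q n).card ^ 2 * 2 ^ n :=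
          Nat.mul_le_mul_left _ (Nat.one_le_two_pow)
  calc ∑ β : ↥(Finset.Nat.antidiagonalTuple q n), |DysonAux.Dinv n q r β|
      ≤ ∑ β : ↥(Finset.Nat.antidiagonalTuple q n),
          |DysonAux.c n (β : Fin q → ℕ) (r : Fin q → ℕ)| := by
        refine Finset.sum_le_sum fun β _ => ?_
        have hm1 : (1 : ℝ) ≤ (Nat.multinomial Finset.univ (r : Fin q → ℕ) : ℝ) := by
          exact_mod_cast Nat.succ_le_of_lt (Nat.multinomial_pos _ _)
        have hF1 : (1 : ℝ) ≤ ∏ i, (((β : Fin q → ℕ) i).factorial : ℝ) := by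
          have h' : 1 ≤ ∏ i, ((β : Fin q → ℕ) i).factorial :=
            Finset.one_le_prod' fun i _ => Nat.factorial_pos _
          exact_mod_cast h'
        rw [DysonAux.Dinv, abs_div, abs_of_pos
          (mul_pos (lt_of_lt_of_le zero_lt_one hm1) (lt_of_lt_of_le zero_lt_one hF1))]
        refine div_le_self (abs_nonneg _) ?_
        calc (1 : ℝ) = 1 * 1 := by ring
          _ ≤ _ := mul_le_mul hm1 hF1 zero_le_one (le_trans zero_le_one hm1)
    _ ≤ ∑ _β : ↥(Finset.Nat.antidiagonalTuple q n), ((q : ℝ) * n) ^ n :=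
        Finset.sum_le_sum fun β _ => DysonAux.abs_c_le n _ _
          (Finset.Nat.mem_antidiagonalTuple.mp β.2)
    _ = ((Finset.Nat.antidiagonalTuple q n).card : ℝ) * ((q : ℝ) * n) ^ n := by
        rw [Finset.sum_const, Finset.card_univ, Fintype.card_coe, nsmul_eq_mul]
    _ ≤ ((Nat.factorial n : ℝ)) ^ 3 * ((Finset.Nat.antidiagonalTuple q n).card : ℝ) ^ 2
          * 2 ^ n := by
        exact_mod_cast hnat
end

section
/- Let d, s ∈ ℕ and 0 < δ < 1/d. Then for every function f that is s times continuously differentiable on [−δ, δ]^d, there exists a polynomial f̂ of degree at most s−1 such that for every k ∈ ℕ₀ with k < s, ‖f − f̂‖_{W^{k,∞}([−δ,δ]^d)} ≤ ((dδ)^{s−k} / (s−k)!) · |f|_{W^{s,∞}([−δ,δ]^d)}. -/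
/-- Partial derivative in direction `i`. -/
noncomputable def pder {d : ℕ} (i : Fin d) (f : (Fin d → ℝ) → ℝ) : (Fin d → ℝ) → ℝ :=
  fun x => fderiv ℝ f x (Pi.single i 1)

/-- Multi-index partial derivative `D^α f`. -/
noncomputable def mder {d : ℕ} (α : Fin d → ℕ) (f : (Fin d → ℝ) → ℝ) : (Fin d → ℝ) → ℝ :=
  (List.finRange d).foldl (fun g i => (pder i)^[α i] g) f

/-- `W^{k,∞}(S)` norm: `max_{|α| ≤ k} sup_{x ∈ S} |D^α f x|`. -/
noncomputable def sobNorm {d : ℕ} (k : ℕ) (S : Set (Fin d → ℝ)) (f : (Fin d → ℝ) → ℝ) : ℝ :=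
  ⨆ p : {q : (Fin d → ℕ) × (Fin d → ℝ) // (∑ i, q.1 i) ≤ k ∧ q.2 ∈ S}, |mder p.1.1 f p.1.2|

/-- `W^{m,∞}(S)` seminorm: `max_{|α| = m} sup_{x ∈ S} |D^α f x|`. -/
noncomputable def sobSemi {d : ℕ} (m : ℕ) (S : Set (Fin d → ℝ)) (f : (Fin d → ℝ) → ℝ) : ℝ :=
  ⨆ p : {q : (Fin d → ℕ) × (Fin d → ℝ) // (∑ i, q.1 i) = m ∧ q.2 ∈ S}, |mder p.1.1 f p.1.2|

/-- `p` is (the evaluation of) a polynomial on `ℝ^d` of total degree at most `s`. -/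
def IsPolyDegLE {d : ℕ} (s : ℕ) (p : (Fin d → ℝ) → ℝ) : Prop :=
  ∃ P : MvPolynomial (Fin d) ℝ, P.totalDegree ≤ s ∧ ∀ x, p x = MvPolynomial.eval x P

namespace TaylorAux

open Set Filter List

variable {d : ℕ}

noncomputable def tder (L : List (Fin d)) (f : (Fin d → ℝ) → ℝ) : (Fin d → ℝ) → ℝ :=
  L.foldr (fun i g => pder i g) f

@[simp] lemma tder_nil (f : (Fin d → ℝ) → ℝ) : tder ([] : List (Fin d)) f = f := rfl

@[simp] lemma tder_cons (i : Fin d) (L : List (Fin d)) (f : (Fin d → ℝ) → ℝ) :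
    tder (i :: L) f = pder i (tder L f) := rfl

lemma tder_append (L₁ L₂ : List (Fin d)) (f : (Fin d → ℝ) → ℝ) :
    tder (L₁ ++ L₂) f = tder L₁ (tder L₂ f) := by
  simp [tder, List.foldr_append]

lemma pder_congr_nhds {i : Fin d} {g₁ g₂ : (Fin d → ℝ) → ℝ} {x : Fin d → ℝ}
    (h : g₁ =ᶠ[nhds x] g₂) : pder i g₁ x = pder i g₂ x := by
  unfold pder; rw [h.fderiv_eq]

lemma tder_congrOn {U : Set (Fin d → ℝ)} (hU : IsOpen U) {g₁ g₂ : (Fin d → ℝ) → ℝ}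
    (h : Set.EqOn g₁ g₂ U) (L : List (Fin d)) : Set.EqOn (tder L g₁) (tder L g₂) U := by
  induction L with
  | nil => exact h
  | cons i L ih =>
    intro x hx
    exact pder_congr_nhds (Filter.eventuallyEq_of_mem (hU.mem_nhds hx) ih)

lemma pderOn {U : Set (Fin d → ℝ)} (hU : IsOpen U) {g : (Fin d → ℝ) → ℝ} {n : ℕ}
    (hg : ContDiffOn ℝ ((n + 1 : ℕ)) g U) (i : Fin d) : ContDiffOn ℝ n (pder i g) U := by
  have h1 : ContDiffOn ℝ n (fderiv ℝ g) U := hg.fderiv_of_isOpen hU (by norm_cast)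
  exact h1.clm_apply contDiffOn_const

lemma contDiffOn_tder {U : Set (Fin d → ℝ)} (hU : IsOpen U) {g : (Fin d → ℝ) → ℝ} {n : ℕ}
    (L : List (Fin d)) (hg : ContDiffOn ℝ ((L.length + n : ℕ)) g U) : ContDiffOn ℝ n (tder L g) U := by
  induction L generalizing n with
  | nil => simpa using hg
  | cons i L ih =>
    have hg' : ContDiffOn ℝ ((L.length + (n + 1) : ℕ)) g U := by
      rw [show L.length + (n + 1) = (i :: L).length + n by simp [Nat.succ_eq_add_one]; ring]
      exact hg
    exact pderOn hU (ih hg') i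

lemma pder_pder_comm {U : Set (Fin d → ℝ)} (hU : IsOpen U) {g : (Fin d → ℝ) → ℝ}
    (hg : ContDiffOn ℝ 2 g U) (i j : Fin d) {x : Fin d → ℝ} (hx : x ∈ U) :
    pder i (pder j g) x = pder j (pder i g) x := by
  have hF : ContDiffOn ℝ 1 (fderiv ℝ g) U := hg.fderiv_of_isOpen hU (by norm_num)
  have hFd : DifferentiableAt ℝ (fderiv ℝ g) x :=
    (hF.differentiableOn (by norm_num)).differentiableAt (hU.mem_nhds hx)
  have hgd : ∀ᶠ y in nhds x, HasFDerivAt g (fderiv ℝ g y) y := by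
    filter_upwards [hU.mem_nhds hx] with y hy
    exact ((hg.differentiableOn (by norm_num)).differentiableAt (hU.mem_nhds hy)).hasFDerivAt
  have hsymm := second_derivative_symmetric_of_eventually hgd hFd.hasFDerivAt
  have key : ∀ v w, fderiv ℝ (fun y => fderiv ℝ g y v) x w = fderiv ℝ (fderiv ℝ g) x w v := by
    intro v w
    have h2 : HasFDerivAt (fun y => fderiv ℝ g y v)
        ((ContinuousLinearMap.apply ℝ ℝ v).comp (fderiv ℝ (fderiv ℝ g) x)) x :=
      (ContinuousLinearMap.apply ℝ ℝ v).hasFDerivAt.comp x hFd.hasFDerivAt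
    rw [h2.fderiv]; rfl
  show fderiv ℝ (fun y => fderiv ℝ g y (Pi.single j 1)) x (Pi.single i 1) = _
  rw [key, hsymm]
  exact (key _ _).symm

lemma tder_perm {U : Set (Fin d → ℝ)} (hU : IsOpen U) {g : (Fin d → ℝ) → ℝ} {n : ℕ}
    (hg : ContDiffOn ℝ n g U) {L₁ L₂ : List (Fin d)} (hp : L₁.Perm L₂)
    (hlen : L₁.length ≤ n) : Set.EqOn (tder L₁ g) (tder L₂ g) U := by
  induction hp with
  | nil => exact fun x _ => rfl
  | cons a h ih =>
    intro x hx
    simp only [tder_cons]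
    exact pder_congr_nhds (Filter.eventuallyEq_of_mem (hU.mem_nhds hx)
      (ih (le_trans (by simp) hlen)))
  | swap i j L =>
    have hL : ContDiffOn ℝ 2 (tder L g) U := by
      refine contDiffOn_tder hU L (hg.of_le ?_)
      exact_mod_cast (by simp at hlen; omega : L.length + 2 ≤ n)
    intro x hx
    simpa only [tder_cons] using pder_pder_comm hU hL j i hx
  | trans h₁ h₂ ih₁ ih₂ =>
    intro x hx
    exact (ih₁ hlen hx).trans (ih₂ (h₁.length_eq ▸ hlen) hx)

/-! ### canonical list of a multi-index -/

def canon (α : Fin d → ℕ) : List (Fin d) :=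
  ((List.finRange d).reverse).flatMap (fun i => List.replicate (α i) i)

lemma tder_replicate (i : Fin d) (k : ℕ) (g : (Fin d → ℝ) → ℝ) :
    tder (List.replicate k i) g = (pder i)^[k] g := by
  induction k with
  | zero => rfl
  | succ k ih =>
    rw [List.replicate_succ]
    simp only [tder_cons, ih]
    rw [Function.iterate_succ']
    rfl

lemma foldl_eq_tder (α : Fin d → ℕ) (g : (Fin d → ℝ) → ℝ) (l : List (Fin d)) :
    l.foldl (fun g i => (pder i)^[α i] g) g
      = tder (l.reverse.flatMap (fun i => List.replicate (α i) i)) g := by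
  induction l generalizing g with
  | nil => rfl
  | cons i l ih =>
    rw [List.foldl_cons, ih, List.reverse_cons, List.flatMap_append, tder_append]
    simp [tder_replicate]

lemma mder_eq_tder (α : Fin d → ℕ) (g : (Fin d → ℝ) → ℝ) : mder α g = tder (canon α) g := by
  unfold mder canon; exact foldl_eq_tder α g (List.finRange d)

lemma count_flatMap_replicate (α : Fin d → ℕ) (j : Fin d) (l : List (Fin d)) :
    (l.flatMap (fun i => List.replicate (α i) i)).count j = (l.count j) * α j := by
  induction l with
  | nil => simp
  | cons i l ih =>
    rw [List.flatMap_cons, List.count_append, ih, List.count_cons, List.count_replicate]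
    rcases eq_or_ne j i with rfl | hne
    · simp; ring
    · simp [hne.symm]

lemma count_canon (α : Fin d → ℕ) (j : Fin d) : (canon α).count j = α j := by
  unfold canon
  rw [count_flatMap_replicate]
  have h1 : ((List.finRange d).reverse).count j = 1 := by
    rw [List.count_reverse]
    exact List.count_eq_one_of_mem (List.nodup_finRange d) (List.mem_finRange j)
  rw [h1, one_mul]

lemma length_eq_sum_count (l : List (Fin d)) : l.length = ∑ j, l.count j := by
  induction l with
  | nil => simp
  | cons i l ih =>
    simp only [List.length_cons, List.count_cons, ih, Finset.sum_add_distrib]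
    simp

lemma perm_canon (L : List (Fin d)) : L.Perm (canon (fun i => L.count i)) := by
  rw [List.perm_iff_count]
  intro j
  rw [count_canon]

lemma length_canon (α : Fin d → ℕ) : (canon α).length = ∑ i, α i := by
  rw [length_eq_sum_count]
  exact Finset.sum_congr rfl fun j _ => count_canon α j

/-! ### the symmetric sum `S` -/

noncomputable def S (d : ℕ) (j : ℕ) (a : (Fin j → Fin d) → ℝ) (x : Fin d → ℝ) : ℝ :=
  ∑ p : Fin j → Fin d, (∏ r, x (p r)) * a p

lemma S_zero (a : (Fin 0 → Fin d) → ℝ) (x : Fin d → ℝ) (p₀ : Fin 0 → Fin d) :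
    S d 0 a x = a p₀ := by
  rw [S]
  rw [Finset.sum_eq_single_of_mem p₀ (Finset.mem_univ _)
    (fun q _ hq => absurd (Subsingleton.elim q p₀) hq)]
  simp

lemma S_succ (j : ℕ) (a : (Fin (j + 1) → Fin d) → ℝ) (x : Fin d → ℝ) :
    S d (j + 1) a x = ∑ i, x i * S d j (fun q => a (Fin.cons i q)) x := by
  rw [S, ← Equiv.sum_comp (Fin.consEquiv (fun _ : Fin (j + 1) => Fin d)), Fintype.sum_prod_type]
  refine Finset.sum_congr rfl fun i _ => ?_
  rw [S, Finset.mul_sum]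
  refine Finset.sum_congr rfl fun q _ => ?_
  show (∏ r, x ((Fin.cons i q : Fin (j+1) → Fin d) r)) * a (Fin.cons i q) = _
  rw [Fin.prod_univ_succ]
  simp [mul_assoc]

lemma ofFn_cons (i : Fin d) {j : ℕ} (q : Fin j → Fin d) :
    List.ofFn (Fin.cons i q : Fin (j+1) → Fin d) = i :: List.ofFn q := by
  rw [List.ofFn_succ]
  simp

lemma differentiable_S (j : ℕ) (a : (Fin j → Fin d) → ℝ) : Differentiable ℝ (S d j a) := by
  induction j with
  | zero =>
    have : S d 0 a = fun _ => a (fun r => r.elim0) := by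
      funext x; exact S_zero a x _
    rw [this]; exact differentiable_const _
  | succ j ih =>
    have h : S d (j + 1) a = fun x => ∑ i, x i * S d j (fun q => a (Fin.cons i q)) x :=
      funext (S_succ j a)
    rw [h]
    apply Differentiable.fun_sum
    intro i _
    exact ((ContinuousLinearMap.proj i : (Fin d → ℝ) →L[ℝ] ℝ).differentiable).mul (ih _)

/-! ### pointwise derivative computation lemmas -/

lemma pder_const (c : ℝ) (i : Fin d) (x : Fin d → ℝ) : pder i (fun _ => c) x = 0 := by
  unfold pder; rw [fderiv_const_apply]; rfl

lemma pder_fun_sum {ι : Type*} (F : Finset ι) (φ : ι → (Fin d → ℝ) → ℝ)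
    (hφ : ∀ t ∈ F, Differentiable ℝ (φ t)) (i : Fin d) (x : Fin d → ℝ) :
    pder i (fun y => ∑ t ∈ F, φ t y) x = ∑ t ∈ F, pder i (φ t) x := by
  unfold pder
  rw [fderiv_fun_sum (fun t ht => (hφ t ht).differentiableAt)]
  simp

lemma pder_const_mul (c : ℝ) (φ : (Fin d → ℝ) → ℝ) (hφ : Differentiable ℝ φ) (i : Fin d)
    (x : Fin d → ℝ) : pder i (fun y => c * φ y) x = c * pder i φ x := by
  unfold pder
  rw [fderiv_const_mul hφ.differentiableAt]
  simp

lemma pder_mul (u v : (Fin d → ℝ) → ℝ) (hu : Differentiable ℝ u) (hv : Differentiable ℝ v)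
    (i : Fin d) (x : Fin d → ℝ) :
    pder i (fun y => u y * v y) x = pder i u x * v x + u x * pder i v x := by
  unfold pder
  rw [fderiv_fun_mul hu.differentiableAt hv.differentiableAt]
  simp [mul_comm, add_comm]

lemma pder_coord (i i₀ : Fin d) (x : Fin d → ℝ) :
    pder i (fun y => y i₀) x = if i₀ = i then 1 else 0 := by
  unfold pder
  have h : (fun y : Fin d → ℝ => y i₀) = (ContinuousLinearMap.proj i₀ :
      (Fin d → ℝ) →L[ℝ] ℝ) := rfl
  rw [h, ContinuousLinearMap.fderiv]
  simp [Pi.single_apply]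

lemma fderiv_apply_eq_sum (ψ : (Fin d → ℝ) → ℝ) (y x : Fin d → ℝ) :
    fderiv ℝ ψ y x = ∑ i, x i * pder i ψ y := by
  have hx : x = ∑ i, x i • (Pi.single i (1 : ℝ) : Fin d → ℝ) := by
    funext j
    rw [Finset.sum_apply]
    simp [Pi.single_apply]
  conv_lhs => rw [hx]
  rw [map_sum]
  simp [pder]

/-! ### derivative of the symmetric sum -/

lemma pder_S (j : ℕ) (a : (Fin (j + 1) → Fin d) → ℝ)
    (hsym : ∀ p q : Fin (j + 1) → Fin d, (List.ofFn p).Perm (List.ofFn q) → a p = a q)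
    (i : Fin d) (x : Fin d → ℝ) :
    pder i (S d (j + 1) a) x = (j + 1 : ℝ) * S d j (fun q => a (Fin.cons i q)) x := by
  induction j generalizing x with
  | zero =>
    have h : S d 1 a = fun y => ∑ i₀, y i₀ * a (Fin.cons i₀ (fun r => r.elim0)) := by
      funext y
      rw [S_succ]
      refine Finset.sum_congr rfl fun i₀ _ => ?_
      rw [S_zero _ _ (fun r => r.elim0)]
    rw [h]
    rw [pder_fun_sum Finset.univ
      (fun i₀ => fun y => y i₀ * a (Fin.cons i₀ (fun r => r.elim0)))
      (fun t _ =>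
      ((ContinuousLinearMap.proj t : (Fin d → ℝ) →L[ℝ] ℝ).differentiable).mul
        (differentiable_const _)) i x]
    have h2 : ∀ i₀ : Fin d, pder i (fun y => y i₀ * a (Fin.cons i₀ (fun r => r.elim0))) x
        = (if i₀ = i then 1 else 0) * a (Fin.cons i₀ (fun r => r.elim0)) := by
      intro i₀
      rw [pder_mul (fun y => y i₀) (fun _ => a (Fin.cons i₀ (fun r => r.elim0)))
        ((ContinuousLinearMap.proj i₀ : (Fin d → ℝ) →L[ℝ] ℝ).differentiable)
        (differentiable_const _) i x, pder_coord, pder_const]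
      ring
    simp only [h2, ite_mul, one_mul, zero_mul]
    rw [Finset.sum_ite_eq' Finset.univ i]
    simp only [Finset.mem_univ, if_true]
    rw [S_zero _ _ (fun r => r.elim0)]
    norm_num
  | succ j ih =>
    have h : S d (j + 2) a = fun y => ∑ i₀, y i₀ * S d (j + 1) (fun q => a (Fin.cons i₀ q)) y :=
      funext (S_succ (j + 1) a)
    rw [h]
    rw [pder_fun_sum Finset.univ
      (fun i₀ => fun y => y i₀ * S d (j + 1) (fun q => a (Fin.cons i₀ q)) y)
      (fun t _ =>
      ((ContinuousLinearMap.proj t : (Fin d → ℝ) →L[ℝ] ℝ).differentiable).mul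
        (differentiable_S _ _)) i x]
    have hsym' : ∀ i₀ : Fin d, ∀ p q : Fin (j + 1) → Fin d,
        (List.ofFn p).Perm (List.ofFn q) → a (Fin.cons i₀ p) = a (Fin.cons i₀ q) := by
      intro i₀ p q hpq
      exact hsym _ _ (by rw [ofFn_cons, ofFn_cons]; exact hpq.cons i₀)
    have h2 : ∀ i₀ : Fin d, pder i (fun y => y i₀ * S d (j + 1) (fun q => a (Fin.cons i₀ q)) y) x
        = (if i₀ = i then 1 else 0) * S d (j + 1) (fun q => a (Fin.cons i₀ q)) x
          + x i₀ * ((j + 1 : ℝ) * S d j (fun q => a (Fin.cons i₀ (Fin.cons i q))) x) := by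
      intro i₀
      rw [pder_mul (fun y => y i₀) (S d (j + 1) (fun q => a (Fin.cons i₀ q)))
        ((ContinuousLinearMap.proj i₀ : (Fin d → ℝ) →L[ℝ] ℝ).differentiable)
        (differentiable_S _ _) i x, pder_coord, ih (fun q => a (Fin.cons i₀ q)) (hsym' i₀)]
    simp only [h2]
    rw [Finset.sum_add_distrib]
    simp only [ite_mul, one_mul, zero_mul]
    rw [Finset.sum_ite_eq' Finset.univ i]
    simp only [Finset.mem_univ, if_true]
    have h3 : ∀ i₀ : Fin d, (fun q => a (Fin.cons i₀ (Fin.cons i q)))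
        = (fun q => a (Fin.cons i (Fin.cons i₀ q))) := by
      intro i₀
      funext q
      refine hsym _ _ ?_
      rw [ofFn_cons, ofFn_cons, ofFn_cons, ofFn_cons]
      exact List.Perm.swap i i₀ (List.ofFn q)
    have h4 : ∑ i₀, x i₀ * ((j + 1 : ℝ) * S d j (fun q => a (Fin.cons i₀ (Fin.cons i q))) x)
        = (j + 1 : ℝ) * S d (j + 1) (fun q => a (Fin.cons i q)) x := by
      rw [S_succ j (fun q => a (Fin.cons i q)) x, Finset.mul_sum]
      refine Finset.sum_congr rfl fun i₀ _ => ?_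
      rw [h3 i₀]
      ring
    rw [h4]
    push_cast
    ring

/-! ### the Taylor polynomial family `T` -/

noncomputable def T (f : (Fin d → ℝ) → ℝ) (s : ℕ) (L : List (Fin d)) : (Fin d → ℝ) → ℝ :=
  fun x => ∑ j ∈ Finset.range (s - L.length),
    ((j.factorial : ℝ))⁻¹ * S d j (fun p => tder (List.ofFn p ++ L) f 0) x

lemma differentiable_T (f : (Fin d → ℝ) → ℝ) (s : ℕ) (L : List (Fin d)) :
    Differentiable ℝ (T f s L) := by
  unfold T
  apply Differentiable.fun_sum
  intro j _
  exact (differentiable_S _ _).const_mul _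

lemma pder_T {U : Set (Fin d → ℝ)} (hU : IsOpen U) (h0 : (0 : Fin d → ℝ) ∈ U)
    {f : (Fin d → ℝ) → ℝ} {s : ℕ} (hf : ContDiffOn ℝ s f U) (L : List (Fin d)) (i : Fin d) :
    pder i (T f s L) = T f s (i :: L) := by
  funext x
  by_cases hL : L.length < s
  · set m' := s - (L.length + 1) with hm'
    have hm : s - L.length = m' + 1 := by omega
    have hTL : T f s L = fun y => ∑ j ∈ Finset.range (m' + 1),
        ((j.factorial : ℝ))⁻¹ * S d j (fun p => tder (List.ofFn p ++ L) f 0) y := by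
      funext y; unfold T; rw [hm]
    rw [hTL]
    rw [pder_fun_sum (Finset.range (m' + 1))
      (fun j => fun y => ((j.factorial : ℝ))⁻¹ * S d j (fun p => tder (List.ofFn p ++ L) f 0) y)
      (fun j _ => (differentiable_S _ _).const_mul _) i x]
    have hterm : ∀ j, pder i (fun y => ((j.factorial : ℝ))⁻¹
          * S d j (fun p => tder (List.ofFn p ++ L) f 0) y) x
        = ((j.factorial : ℝ))⁻¹ * pder i (S d j (fun p => tder (List.ofFn p ++ L) f 0)) x :=
      fun j => pder_const_mul _ _ (differentiable_S _ _) i x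
    simp only [hterm]
    rw [Finset.sum_range_succ']
    have hzero : pder i (S d 0 (fun p => tder (List.ofFn p ++ L) f 0)) x = 0 := by
      have hS0 : S d 0 (fun p : Fin 0 → Fin d => tder (List.ofFn p ++ L) f 0)
          = fun _ => tder (List.ofFn (fun r : Fin 0 => r.elim0) ++ L) f 0 := by
        funext y; exact S_zero _ _ _
      rw [hS0, pder_const]
    rw [hzero]
    have hmain : ∀ j, j < m' → ((Nat.factorial (j + 1) : ℝ))⁻¹
          * pder i (S d (j + 1) (fun p => tder (List.ofFn p ++ L) f 0)) x
        = ((j.factorial : ℝ))⁻¹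
          * S d j (fun q => tder (List.ofFn q ++ (i :: L)) f 0) x := by
      intro j hj
      have hsymj : ∀ p q : Fin (j + 1) → Fin d, (List.ofFn p).Perm (List.ofFn q) →
          tder (List.ofFn p ++ L) f 0 = tder (List.ofFn q ++ L) f 0 := by
        intro p q hpq
        refine tder_perm hU hf (hpq.append_right L) ?_ h0
        simp only [List.length_append, List.length_ofFn]
        omega
      rw [pder_S j _ hsymj i x]
      have hb : (fun q => tder (List.ofFn (Fin.cons i q : Fin (j + 1) → Fin d) ++ L) f 0)
          = (fun q : Fin j → Fin d => tder (List.ofFn q ++ (i :: L)) f 0) := by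
        funext q
        rw [ofFn_cons]
        have hperm : (i :: (List.ofFn q ++ L)).Perm (List.ofFn q ++ i :: L) :=
          List.perm_middle.symm
        have : ((i :: List.ofFn q) ++ L) = i :: (List.ofFn q ++ L) := rfl
        rw [this]
        refine tder_perm hU hf hperm ?_ h0
        simp only [List.length_cons, List.length_append, List.length_ofFn]
        omega
      rw [hb]
      rw [Nat.factorial_succ]
      push_cast
      have hfac : (j.factorial : ℝ) ≠ 0 := Nat.cast_ne_zero.mpr j.factorial_ne_zero
      field_simp
    rw [Finset.sum_congr rfl (fun j hj => hmain j (Finset.mem_range.mp hj))]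
    unfold T
    simp only [List.length_cons]
    rw [← hm']
    ring
  · have h1 : s - L.length = 0 := by omega
    have h2 : s - (i :: L).length = 0 := by simp; omega
    have hTL : T f s L = fun _ => 0 := by
      funext y; unfold T; rw [h1]; simp
    have hTiL : T f s (i :: L) = fun _ => 0 := by
      funext y; unfold T; rw [h2]; simp
    rw [hTL, hTiL, pder_const]

lemma tder_T {U : Set (Fin d → ℝ)} (hU : IsOpen U) (h0 : (0 : Fin d → ℝ) ∈ U)
    {f : (Fin d → ℝ) → ℝ} {s : ℕ} (hf : ContDiffOn ℝ s f U) (L : List (Fin d)) :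
    tder L (T f s []) = T f s L := by
  induction L with
  | nil => rfl
  | cons i L ih => rw [tder_cons, ih, pder_T hU h0 hf]

/-! ### difference rule, chain rule along lines, remainder tools -/

lemma tder_sub {U : Set (Fin d → ℝ)} (hU : IsOpen U) {u v : (Fin d → ℝ) → ℝ} {n : ℕ}
    (hu : ContDiffOn ℝ (n : ℕ) u U) (hv : ∀ L' : List (Fin d), Differentiable ℝ (tder L' v))
    (L : List (Fin d)) (hlen : L.length ≤ n) :
    Set.EqOn (tder L (fun y => u y - v y)) (fun y => tder L u y - tder L v y) U := by
  induction L with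
  | nil => intro x _; rfl
  | cons i L ih =>
    intro x hx
    have hev : tder L (fun y => u y - v y) =ᶠ[nhds x] fun y => tder L u y - tder L v y :=
      Filter.eventuallyEq_of_mem (hU.mem_nhds hx) (ih (by simpa using Nat.le_of_succ_le hlen))
    have hdu : DifferentiableAt ℝ (tder L u) x := by
      have h1 : ContDiffOn ℝ ((1 : ℕ)) (tder L u) U := by
        refine contDiffOn_tder hU L (hu.of_le ?_)
        exact_mod_cast (by simpa using hlen : L.length + 1 ≤ n)
      exact (h1.differentiableOn (by norm_num)).differentiableAt (hU.mem_nhds hx)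
    rw [tder_cons, pder_congr_nhds hev]
    unfold pder
    rw [fderiv_fun_sub hdu (hv L).differentiableAt]
    simp only [ContinuousLinearMap.sub_apply]
    rfl

lemma hasDerivAt_line (ψ : (Fin d → ℝ) → ℝ) (x : Fin d → ℝ) (t : ℝ)
    (hψ : DifferentiableAt ℝ ψ (t • x)) :
    HasDerivAt (fun t' => ψ (t' • x)) (∑ i, x i * pder i ψ (t • x)) t := by
  have hline : HasDerivAt (fun t' : ℝ => t' • x) x t := by
    simpa using (hasDerivAt_id t).smul_const x
  have hcomp := hψ.hasFDerivAt.comp_hasDerivAt t hline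
  rwa [fderiv_apply_eq_sum] at hcomp

lemma iteratedDeriv_line {U : Set (Fin d → ℝ)} (hU : IsOpen U) {g : (Fin d → ℝ) → ℝ} {n : ℕ}
    (hg : ContDiffOn ℝ (n : ℕ) g U) (x : Fin d → ℝ) :
    ∀ j : ℕ, j ≤ n → ∀ t : ℝ, t • x ∈ U →
      iteratedDeriv j (fun t' => g (t' • x)) t = S d j (fun p => tder (List.ofFn p) g (t • x)) x := by
  have hdiffL : ∀ L : List (Fin d), L.length < n → ∀ y ∈ U, DifferentiableAt ℝ (tder L g) y := by
    intro L hL y hy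
    have h1 : ContDiffOn ℝ ((1 : ℕ)) (tder L g) U := by
      refine contDiffOn_tder hU L (hg.of_le ?_)
      exact_mod_cast (by omega : L.length + 1 ≤ n)
    exact (h1.differentiableOn (by norm_num)).differentiableAt (hU.mem_nhds hy)
  have hV : IsOpen ((fun t : ℝ => t • x) ⁻¹' U) :=
    hU.preimage (continuous_id.smul continuous_const)
  intro j
  induction j with
  | zero =>
    intro _ t ht
    rw [iteratedDeriv_zero, S_zero _ _ (fun r => r.elim0)]
    simp
  | succ j IH =>
    intro hj t ht
    rw [iteratedDeriv_succ]
    have hev : iteratedDeriv j (fun t' => g (t' • x))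
        =ᶠ[nhds t] fun t' => S d j (fun p => tder (List.ofFn p) g (t' • x)) x :=
      Filter.eventuallyEq_of_mem (hV.mem_nhds ht)
        (fun t' ht' => IH (Nat.le_of_succ_le hj) t' ht')
    rw [hev.deriv_eq]
    have hD : HasDerivAt (fun t' => S d j (fun p => tder (List.ofFn p) g (t' • x)) x)
        (∑ p : Fin j → Fin d, (∏ r, x (p r))
          * (∑ i, x i * tder (i :: List.ofFn p) g (t • x))) t := by
      have hform : (fun t' : ℝ => S d j (fun p => tder (List.ofFn p) g (t' • x)) x)
          = fun t' => ∑ p : Fin j → Fin d, (∏ r, x (p r)) * tder (List.ofFn p) g (t' • x) := rfl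
      rw [hform]
      apply HasDerivAt.fun_sum
      intro p _
      have hψ : DifferentiableAt ℝ (tder (List.ofFn p) g) (t • x) :=
        hdiffL _ (by simp; omega) _ ht
      have hc := (hasDerivAt_line (tder (List.ofFn p) g) x t hψ).const_mul (∏ r, x (p r))
      exact hc
    rw [hD.deriv, S_succ]
    have hR : ∀ i : Fin d, S d j (fun q => tder (List.ofFn (Fin.cons i q)) g (t • x)) x
        = ∑ q : Fin j → Fin d, (∏ r, x (q r)) * tder (i :: List.ofFn q) g (t • x) := by
      intro i
      rw [S]
      exact Finset.sum_congr rfl fun q _ => by rw [ofFn_cons]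
    simp only [hR, Finset.mul_sum]
    rw [Finset.sum_comm]
    refine Finset.sum_congr rfl fun i _ => Finset.sum_congr rfl fun p _ => by ring

lemma iDW_eq_iD {h : ℝ → ℝ} {V : Set ℝ} (hV : IsOpen V) (hIV : Icc (0 : ℝ) 1 ⊆ V) {J : ℕ}
    (hdiff : ∀ j < J, DifferentiableOn ℝ (iteratedDeriv j h) V) :
    ∀ j ≤ J, ∀ t ∈ Icc (0 : ℝ) 1, iteratedDerivWithin j h (Icc 0 1) t = iteratedDeriv j h t := by
  intro j
  induction j with
  | zero => intro _ t _; simp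
  | succ j IH =>
    intro hj t ht
    rw [iteratedDerivWithin_succ]
    rw [derivWithin_congr (fun y hy => IH (by omega) y hy) (IH (by omega) t ht)]
    rw [DifferentiableAt.derivWithin
      (((hdiff j (by omega)) t (hIV ht)).differentiableAt (hV.mem_nhds (hIV ht)))
      ((uniqueDiffOn_Icc one_pos) t ht)]
    rw [iteratedDeriv_succ]

lemma abs_S_le (hd : 0 < d) (j : ℕ) (a : (Fin j → Fin d) → ℝ) (x : Fin d → ℝ) {M : ℝ}
    (ha : ∀ p, |a p| ≤ M) : |S d j a x| ≤ (∑ i, |x i|) ^ j * M := by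
  have hM : 0 ≤ M := le_trans (abs_nonneg _) (ha fun _ => ⟨0, hd⟩)
  rw [S]
  refine (Finset.abs_sum_le_sum_abs _ _).trans ?_
  have h1 : ∀ p : Fin j → Fin d, |(∏ r, x (p r)) * a p| ≤ (∏ r, |x (p r)|) * M := by
    intro p
    rw [abs_mul, Finset.abs_prod]
    exact mul_le_mul_of_nonneg_left (ha p) (Finset.prod_nonneg fun _ _ => abs_nonneg _)
  refine (Finset.sum_le_sum fun p _ => h1 p).trans ?_
  rw [← Finset.sum_mul]
  refine mul_le_mul_of_nonneg_right ?_ hM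
  rw [Finset.sum_pow' Finset.univ (fun i => |x i|) j, Fintype.piFinset_univ]

/-! ### the pointwise remainder bound -/

lemma smul_mem_box {δ : ℝ} {t : ℝ} (ht : t ∈ Icc (0 : ℝ) 1)
    {y : Fin d → ℝ} (hy : y ∈ Icc (fun _ => -δ) (fun _ => δ)) :
    t • y ∈ Icc (fun _ => -δ) (fun _ => δ) := by
  have key : ∀ i, |t * y i| ≤ δ := by
    intro i
    have h1 : |y i| ≤ δ := abs_le.mpr ⟨hy.1 i, hy.2 i⟩
    have h2 : |t| ≤ 1 := by rw [abs_of_nonneg ht.1]; exact ht.2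
    calc |t * y i| = |t| * |y i| := abs_mul _ _
      _ ≤ 1 * δ := mul_le_mul h2 h1 (abs_nonneg _) one_pos.le
      _ = δ := one_mul δ
  constructor <;> intro i
  · have h3 := (abs_le.mp (key i)).1
    simpa using h3
  · have h3 := (abs_le.mp (key i)).2
    simpa using h3

lemma remainder_bound (hd : 0 < d) {s : ℕ} (hs : 1 ≤ s) {δ : ℝ} (hδ0 : 0 < δ)
    {U : Set (Fin d → ℝ)} (hU : IsOpen U)
    (hbox : Icc (fun _ => -δ) (fun _ => δ) ⊆ U) (f : (Fin d → ℝ) → ℝ)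
    (hf : ContDiffOn ℝ (s : ℕ) f U) {M : ℝ}
    (hM : ∀ (β : Fin d → ℕ) (y : Fin d → ℝ), (∑ i, β i) = s →
      y ∈ Icc (fun _ => -δ) (fun _ => δ) → |mder β f y| ≤ M)
    (α : Fin d → ℕ) (hα : (∑ i, α i) < s) (x : Fin d → ℝ)
    (hx : x ∈ Icc (fun _ => -δ) (fun _ => δ)) :
    |mder α (fun y => f y - T f s [] y) x| ≤
      (∑ i, |x i|) ^ (s - ∑ i, α i) / (Nat.factorial (s - ∑ i, α i)) * M := by
  classical
  set box : Set (Fin d → ℝ) := Icc (fun _ => -δ) (fun _ => δ) with hboxdef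
  have h0box : (0 : Fin d → ℝ) ∈ box := by
    constructor <;> intro i <;> simp <;> positivity
  have h0U : (0 : Fin d → ℝ) ∈ U := hbox h0box
  set k' := ∑ i, α i with hk'
  set m := s - k' with hmdef
  have hm1 : 1 ≤ m := by omega
  set cα := canon α with hcα
  have hlcα : cα.length = k' := length_canon α
  set g := tder cα f with hgdef
  have hg : ContDiffOn ℝ ((m : ℕ)) g U := by
    refine contDiffOn_tder hU cα ?_
    rw [hlcα, show k' + m = s by omega]
    exact hf
  -- difference splits
  have hsplit : mder α (fun y => f y - T f s [] y) x = g x - T f s cα x := by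
    rw [mder_eq_tder, ← hcα]
    have h1 := tder_sub hU (v := T f s []) hf
      (fun L' => by rw [tder_T hU h0U hf L']; exact differentiable_T f s L') cα
      (by rw [hlcα]; omega) (hbox hx)
    rw [h1]
    show tder cα f x - tder cα (T f s []) x = g x - T f s cα x
    rw [tder_T hU h0U hf cα]
  rw [hsplit]
  -- the Taylor polynomial matches the 1D Taylor polynomial of h
  set h : ℝ → ℝ := fun t => g (t • x) with hhdef
  set V : Set ℝ := (fun t : ℝ => t • x) ⁻¹' U with hVdef
  have hVopen : IsOpen V := hU.preimage (continuous_id.smul continuous_const)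
  have hIccV : Icc (0 : ℝ) 1 ⊆ V := fun t ht => hbox (smul_mem_box ht hx)
  have hchain : ∀ j ≤ m, ∀ t : ℝ, t • x ∈ U →
      iteratedDeriv j h t = S d j (fun p => tder (List.ofFn p) g (t • x)) x :=
    iteratedDeriv_line hU hg x
  have hdiffL : ∀ L : List (Fin d), L.length < m → ∀ y ∈ U, DifferentiableAt ℝ (tder L g) y := by
    intro L hL y hy
    have h1 : ContDiffOn ℝ ((1 : ℕ)) (tder L g) U := by
      refine contDiffOn_tder hU L (hg.of_le ?_)
      exact_mod_cast (by omega : L.length + 1 ≤ m)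
    exact (h1.differentiableOn (by norm_num)).differentiableAt (hU.mem_nhds hy)
  have hdiffΦ : ∀ j < m, DifferentiableOn ℝ (iteratedDeriv j h) V := by
    intro j hj
    have hΦ : DifferentiableOn ℝ
        (fun t : ℝ => S d j (fun p => tder (List.ofFn p) g (t • x)) x) V := by
      have hform : (fun t : ℝ => S d j (fun p => tder (List.ofFn p) g (t • x)) x)
          = fun t : ℝ => ∑ p : Fin j → Fin d, (∏ r, x (p r)) * tder (List.ofFn p) g (t • x) := rfl
      rw [hform]
      intro t ht
      refine DifferentiableAt.differentiableWithinAt ?_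
      refine DifferentiableAt.fun_sum fun p _ => ?_
      refine DifferentiableAt.const_mul ?_ _
      exact ((hasDerivAt_line (tder (List.ofFn p) g) x t
        (hdiffL _ (by simp; omega) _ ht)).differentiableAt)
    refine hΦ.congr fun t ht => hchain j (by omega) t ht
  have hIW : ∀ j ≤ m, ∀ t ∈ Icc (0 : ℝ) 1,
      iteratedDerivWithin j h (Icc 0 1) t = iteratedDeriv j h t :=
    iDW_eq_iD hVopen hIccV (J := m) hdiffΦ
  obtain ⟨n, hn⟩ : ∃ n, m = n + 1 := ⟨m - 1, by omega⟩
  have hCh : ContDiffOn ℝ ((n : ℕ)) h (Icc 0 1) := by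
    have hline : ContDiffOn ℝ ((n : ℕ)) (fun t : ℝ => t • x) (Icc 0 1) :=
      (contDiff_id.smul contDiff_const).contDiffOn
    refine ContDiffOn.comp (hg.of_le ?_) hline ?_
    · exact_mod_cast (by omega : n ≤ m)
    · intro t ht
      exact hbox (smul_mem_box ht hx)
  have hf' : DifferentiableOn ℝ (iteratedDerivWithin n h (Icc 0 1)) (Ioo 0 1) := by
    have h1 : DifferentiableOn ℝ (iteratedDeriv n h) (Ioo 0 1) :=
      (hdiffΦ n (by omega)).mono (fun t ht => hIccV (Ioo_subset_Icc_self ht))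
    exact h1.congr fun t ht => hIW n (by omega) t (Ioo_subset_Icc_self ht)
  obtain ⟨x', hx', hrem⟩ := taylor_mean_remainder_lagrange (n := n) (x₀ := 0) (x := 1) zero_ne_one
    (by rw [Set.uIcc_of_le zero_le_one]; exact hCh)
    (by rw [Set.uIcc_of_le zero_le_one, Set.uIoo_of_le zero_le_one]; exact hf')
  rw [Set.uIcc_of_le zero_le_one] at hrem
  rw [Set.uIoo_of_le zero_le_one] at hx'
  -- identify the Taylor polynomial value
  have htay : taylorWithinEval h n (Icc 0 1) 0 1 = T f s cα x := by
    rw [taylor_within_apply]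
    unfold T
    rw [hlcα, ← hmdef, hn]
    refine Finset.sum_congr rfl fun j hj => ?_
    have hj' : j ≤ m := by
      have := Finset.mem_range.mp hj; omega
    rw [hIW j hj' 0 (by constructor <;> norm_num)]
    have h0x : (0 : ℝ) • x ∈ U := by rw [zero_smul]; exact h0U
    rw [hchain j hj' 0 h0x]
    simp only [zero_smul]
    have hSc : (fun p : Fin j → Fin d => tder (List.ofFn p) g (0 : Fin d → ℝ))
        = (fun p : Fin j → Fin d => tder (List.ofFn p ++ cα) f 0) :=
      funext fun p => by rw [tder_append]
    rw [hSc]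
    simp [smul_eq_mul]
  have hh1 : h 1 = g x := by rw [hhdef]; simp
  rw [← hh1, ← htay]
  rw [hrem]
  -- bound the remainder
  have hx'Icc : x' ∈ Icc (0 : ℝ) 1 := Ioo_subset_Icc_self hx'
  have hx'U : x' • x ∈ U := hbox (smul_mem_box hx'Icc hx)
  rw [hIW (n + 1) (by omega) x' hx'Icc, hchain (n + 1) (by omega) x' hx'U]
  have hbound : ∀ p : Fin (n + 1) → Fin d,
      |tder (List.ofFn p) g (x' • x)| ≤ M := by
    intro p
    have h1 : tder (List.ofFn p) g (x' • x) = tder (List.ofFn p ++ cα) f (x' • x) := by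
      rw [tder_append]
    set Lf := List.ofFn p ++ cα with hLf
    have hlen : Lf.length = s := by
      rw [hLf]; simp [hlcα]; omega
    set β : Fin d → ℕ := fun i => Lf.count i with hβ
    have hβs : (∑ i, β i) = s := by rw [← hlen, length_eq_sum_count]
    have hyb : x' • x ∈ box := smul_mem_box hx'Icc hx
    have h2 : tder Lf f (x' • x) = mder β f (x' • x) := by
      rw [mder_eq_tder]
      exact tder_perm hU hf (perm_canon Lf) (by rw [hlen]) (hbox hyb)
    rw [h1, h2]
    exact hM β _ hβs hyb
  have hS := abs_S_le hd (n + 1) _ x hbound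
  have hfa : (0:ℝ) < ((n + 1).factorial : ℝ) := by positivity
  rw [abs_div]
  rw [abs_mul]
  have h1pow : |((1 : ℝ) - 0) ^ (n + 1)| = 1 := by norm_num
  rw [h1pow, mul_one]
  have habs_fact : |((n + 1).factorial : ℝ)| = ((n + 1).factorial : ℝ) := abs_of_pos hfa
  rw [habs_fact]
  rw [show m = n + 1 from hn]
  rw [div_eq_mul_inv, div_eq_mul_inv]
  have hM0 : 0 ≤ M := le_trans (abs_nonneg _) (hbound (fun _ => ⟨0, hd⟩))
  calc |S d (n + 1) (fun p => tder (List.ofFn p) g (x' • x)) x| * (((n + 1).factorial : ℝ))⁻¹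
      ≤ ((∑ i, |x i|) ^ (n + 1) * M) * (((n + 1).factorial : ℝ))⁻¹ := by
        exact mul_le_mul_of_nonneg_right hS (by positivity)
    _ = (∑ i, |x i|) ^ (n + 1) * (((n + 1).factorial : ℝ))⁻¹ * M := by ring

/-! ### `T f s []` is a polynomial of degree at most `s - 1` -/

lemma isPoly_T (f : (Fin d → ℝ) → ℝ) {s : ℕ} (hs : 1 ≤ s) : IsPolyDegLE (s - 1) (T f s []) := by
  classical
  refine ⟨∑ j ∈ Finset.range s, ∑ p : Fin j → Fin d,
    MvPolynomial.C ((j.factorial : ℝ)⁻¹ * tder (List.ofFn p) f 0) * ∏ r, MvPolynomial.X (p r),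
    ?_, ?_⟩
  · refine le_trans (MvPolynomial.totalDegree_finset_sum _ _) ?_
    refine Finset.sup_le fun j hj => ?_
    refine le_trans (MvPolynomial.totalDegree_finset_sum _ _) ?_
    refine Finset.sup_le fun p _ => ?_
    refine le_trans (MvPolynomial.totalDegree_mul _ _) ?_
    rw [MvPolynomial.totalDegree_C, zero_add]
    refine le_trans (MvPolynomial.totalDegree_finset_prod _ _) ?_
    have hj' : j ≤ s - 1 := by have := Finset.mem_range.mp hj; omega
    refine le_trans (Finset.sum_le_sum fun r _ => le_of_eq (MvPolynomial.totalDegree_X _)) ?_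
    simpa using hj'
  · intro x
    unfold T
    simp only [List.append_nil, List.length_nil, Nat.sub_zero]
    rw [map_sum]
    refine Finset.sum_congr rfl fun j _ => ?_
    rw [map_sum]
    unfold S
    rw [Finset.mul_sum]
    refine Finset.sum_congr rfl fun p _ => ?_
    rw [map_mul, MvPolynomial.eval_C, map_prod]
    simp only [MvPolynomial.eval_X]
    ring

end TaylorAux

open TaylorAux

/-- **Lemma A.9 (Taylor's theorem).** For `d, s ≥ 1`, `0 < δ < 1/d` and `f` that is `s` times
continuously differentiable on (a neighborhood of) `[-δ, δ]^d`, there is a polynomial `f̂` of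
degree at most `s-1` such that for all `k < s`,
`‖f - f̂‖_{W^{k,∞}([-δ,δ]^d)} ≤ (dδ)^{s-k}/(s-k)! · |f|_{W^{s,∞}([-δ,δ]^d)}`. -/
theorem taylor_poly_approx (d s : ℕ) (hd : 1 ≤ d) (hs : 1 ≤ s)
    (δ : ℝ) (hδ0 : 0 < δ) (hδ : δ < 1 / d)
    (f : (Fin d → ℝ) → ℝ)
    (hf : ∃ U, IsOpen U ∧ Set.Icc (fun _ => -δ) (fun _ => δ) ⊆ U ∧ ContDiffOn ℝ s f U) :
    ∃ fhat : (Fin d → ℝ) → ℝ, IsPolyDegLE (s - 1) fhat ∧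
      ∀ k : ℕ, k < s →
        sobNorm k (Set.Icc (fun _ => -δ) (fun _ => δ)) (fun x => f x - fhat x) ≤
          ((d : ℝ) * δ) ^ (s - k) / (Nat.factorial (s - k)) *
            sobSemi s (Set.Icc (fun _ => -δ) (fun _ => δ)) f := by
  classical
  obtain ⟨U, hU, hbox, hf⟩ := hf
  have hd0 : 0 < d := hd
  set box : Set (Fin d → ℝ) := Set.Icc (fun _ => -δ) (fun _ => δ) with hboxdef
  have h0box : (0 : Fin d → ℝ) ∈ box := by
    constructor <;> intro i <;> show _ ≤ _ <;> simp <;> positivity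
  -- a uniform bound on all multi-derivatives of order `s` over the box
  have hCex : ∃ C : ℝ, ∀ (β : Fin d → ℕ) (y : Fin d → ℝ),
      (∑ i, β i) = s → y ∈ box → |mder β f y| ≤ C := by
    have hcont : ∀ γ : Fin d → Fin (s + 1), ∃ C : ℝ, (∑ i, ((γ i : ℕ))) = s →
        ∀ y ∈ box, |mder (fun i => (γ i : ℕ)) f y| ≤ C := by
      intro γ
      by_cases hγ : (∑ i, ((γ i : ℕ))) = s
      · have h1 : ContDiffOn ℝ ((0 : ℕ)) (tder (canon fun i => (γ i : ℕ)) f) U := by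
          refine contDiffOn_tder hU _ ?_
          rw [show (canon fun i => (γ i : ℕ)).length + 0 = s by rw [length_canon]; omega]
          exact hf
        obtain ⟨C, hC⟩ := IsCompact.exists_bound_of_continuousOn isCompact_Icc
          ((h1.continuousOn).mono hbox)
        refine ⟨C, fun _ y hy => ?_⟩
        rw [mder_eq_tder]
        simpa using hC y hy
      · exact ⟨0, fun h => absurd h hγ⟩
    choose C hC using hcont
    refine ⟨Finset.univ.sup' ⟨fun _ => 0, Finset.mem_univ _⟩ C, ?_⟩
    intro β y hβ hy
    have hβle : ∀ i, β i < s + 1 := by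
      intro i
      have := Finset.single_le_sum (f := β) (fun i _ => Nat.zero_le _) (Finset.mem_univ i)
      omega
    have hβγ : (fun i => (((fun i => (⟨β i, hβle i⟩ : Fin (s + 1))) i : ℕ))) = β := rfl
    calc |mder β f y| = |mder (fun i => (((fun i => (⟨β i, hβle i⟩ : Fin (s + 1))) i : ℕ))) f y| := by
          rw [hβγ]
      _ ≤ C (fun i => (⟨β i, hβle i⟩ : Fin (s + 1))) := by
          refine hC _ ?_ y hy
          rw [show (∑ i, (((fun i => (⟨β i, hβle i⟩ : Fin (s + 1))) i : ℕ))) = ∑ i, β i from rfl]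
          exact hβ
      _ ≤ _ := Finset.le_sup' C (Finset.mem_univ _)
  obtain ⟨C, hC⟩ := hCex
  have hbddS : BddAbove (Set.range
      fun p : {q : (Fin d → ℕ) × (Fin d → ℝ) // (∑ i, q.1 i) = s ∧ q.2 ∈ box} =>
        |mder p.1.1 f p.1.2|) := by
    refine ⟨C, ?_⟩
    rintro r ⟨p, rfl⟩
    exact hC p.1.1 p.1.2 p.2.1 p.2.2
  have hMle : ∀ (β : Fin d → ℕ) (y : Fin d → ℝ), (∑ i, β i) = s → y ∈ box →
      |mder β f y| ≤ sobSemi s box f := by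
    intro β y hβ hy
    exact le_ciSup hbddS ⟨⟨β, y⟩, hβ, hy⟩
  have hM0 : 0 ≤ sobSemi s box f := by
    set i₀ : Fin d := ⟨0, hd0⟩
    set β₀ : Fin d → ℕ := fun i => if i = i₀ then s else 0 with hβ₀
    have hsum : (∑ i, β₀ i) = s := by
      rw [hβ₀]
      rw [Finset.sum_ite_eq' Finset.univ i₀ (fun _ => s)]
      simp
    exact le_trans (abs_nonneg _) (hMle β₀ 0 hsum h0box)
  refine ⟨T f s [], isPoly_T f hs, ?_⟩
  intro k hk
  have hdδ0 : (0 : ℝ) ≤ (d : ℝ) * δ := by positivity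
  have hdδ1 : (d : ℝ) * δ < 1 := by
    have hd' : (0 : ℝ) < (d : ℝ) := by exact_mod_cast hd0
    rw [lt_div_iff₀ hd'] at hδ
    linarith [hδ]
  have hrhs0 : 0 ≤ ((d : ℝ) * δ) ^ (s - k) / (Nat.factorial (s - k)) * sobSemi s box f := by
    have h1 : (0:ℝ) ≤ ((d : ℝ) * δ) ^ (s - k) / (Nat.factorial (s - k)) := by positivity
    exact mul_nonneg h1 hM0
  refine Real.iSup_le ?_ hrhs0
  rintro ⟨⟨α, x⟩, hαk, hx⟩
  have hαk' : (∑ i, α i) ≤ k := hαk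
  have hαs : (∑ i, α i) < s := lt_of_le_of_lt hαk' hk
  have hptw := remainder_bound hd0 hs hδ0 hU hbox f hf (M := sobSemi s box f) hMle α hαs x hx
  refine le_trans hptw ?_
  set m := s - ∑ i, α i with hm
  have hsumx0 : (0 : ℝ) ≤ ∑ i, |x i| := Finset.sum_nonneg fun i _ => abs_nonneg _
  have hsum_le : (∑ i, |x i|) ≤ (d : ℝ) * δ := by
    have h1 : ∀ i : Fin d, |x i| ≤ δ := fun i => abs_le.mpr ⟨hx.1 i, hx.2 i⟩
    calc (∑ i, |x i|) ≤ ∑ _i : Fin d, δ := Finset.sum_le_sum fun i _ => h1 i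
      _ = (d : ℝ) * δ := by
        rw [Finset.sum_const, Finset.card_univ, Fintype.card_fin, nsmul_eq_mul]
  have hmk : s - k ≤ m := by rw [hm]; omega
  have hpow : (∑ i, |x i|) ^ m ≤ ((d : ℝ) * δ) ^ (s - k) := by
    refine le_trans (pow_le_pow_left₀ hsumx0 hsum_le m) ?_
    exact pow_le_pow_of_le_one hdδ0 hdδ1.le hmk
  have hfact : ((Nat.factorial (s - k) : ℝ)) ≤ ((Nat.factorial m : ℝ)) :=
    Nat.cast_le.mpr (Nat.factorial_le hmk)
  have hfk0 : (0 : ℝ) < (Nat.factorial (s - k) : ℝ) := by positivity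
  have hfm0 : (0 : ℝ) < (Nat.factorial m : ℝ) := by positivity
  refine mul_le_mul_of_nonneg_right ?_ hM0
  calc (∑ i, |x i|) ^ m / (Nat.factorial m : ℝ)
      ≤ ((d : ℝ) * δ) ^ (s - k) / (Nat.factorial m : ℝ) := by gcongr
    _ ≤ ((d : ℝ) * δ) ^ (s - k) / (Nat.factorial (s - k) : ℝ) := by gcongr
end

section
/- Let k ∈ ℕ₀, let s be an odd natural number, and let M > 0. Then for every ε > 0 there exists a shallow tanh neural network Ψ : [−M, M] → ℝ^{(s+1)/2} of width (s+1)/2 such that for every odd p with p ≤ s, ‖f_p − Ψ_{(p+1)/2}‖_{W^{k,∞}([−M,M])} ≤ ε, where f_p(y) = y^p and Ψ_{(p+1)/2} denotes the ((p+1)/2)-th output component of Ψ. -/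
/-- Univariate `W^{k,∞}(S)` norm: `max_{m ≤ k} sup_{x ∈ S} |f^{(m)}(x)|`. -/
noncomputable def sobNorm1 (k : ℕ) (S : Set ℝ) (f : ℝ → ℝ) : ℝ :=
  ⨆ p : {q : ℕ × ℝ // q.1 ≤ k ∧ q.2 ∈ S}, |iteratedDeriv p.1.1 f p.1.2|

/-- A shallow tanh neural network of width `m` from `ℝ` to `ℝ^q`:
`Ψ(x) = W₂ tanh(W₁ x + b₁) + b₂`. -/
def IsShallowTanh1 {q : ℕ} (m : ℕ) (Ψ : ℝ → Fin q → ℝ) : Prop :=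
  ∃ (W₁ b₁ : Fin m → ℝ) (W₂ : Matrix (Fin q) (Fin m) ℝ) (b₂ : Fin q → ℝ),
    ∀ x j, Ψ x j = (∑ i, W₂ j i * Real.tanh (W₁ i * x + b₁ i)) + b₂ j


open Real Set Finset

namespace NNAux

/-! ### Coefficients of the polynomials expressing `tanh` derivatives -/

def tc : ℕ → ℕ → ℤ
  | 0, j => if j = 1 then 1 else 0
  | (m+1), j => ((j:ℤ)+1) * tc m (j+1) - ((j-1 : ℕ) : ℤ) * tc m (j-1)

lemma tc_zero_of_big : ∀ m j, m + 1 < j → tc m j = 0 := by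
  intro m
  induction m with
  | zero => intro j hj; simp only [tc]; rw [if_neg]; omega
  | succ m ih =>
    intro j hj
    simp only [tc]
    rw [ih (j+1) (by omega), ih (j-1) (by omega)]
    ring

lemma contDiff_tanh : ContDiff ℝ ⊤ Real.tanh := by
  have : Real.tanh = fun x => Real.sinh x / Real.cosh x := by
    funext x; exact Real.tanh_eq_sinh_div_cosh x
  rw [this]
  exact Real.contDiff_sinh.div Real.contDiff_cosh (fun x => (Real.cosh_pos x).ne')

lemma hasDerivAt_tanh (x : ℝ) : HasDerivAt Real.tanh (1 - Real.tanh x ^ 2) x := by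
  have h : HasDerivAt (fun x => Real.sinh x / Real.cosh x)
      ((Real.cosh x * Real.cosh x - Real.sinh x * Real.sinh x) / Real.cosh x ^ 2) x :=
    (Real.hasDerivAt_sinh x).div (Real.hasDerivAt_cosh x) (Real.cosh_pos x).ne'
  have e : Real.tanh = fun x => Real.sinh x / Real.cosh x := by
    funext y; exact Real.tanh_eq_sinh_div_cosh y
  rw [e]
  convert h using 1
  have hc := (Real.cosh_pos x).ne'
  field_simp

lemma abs_tanh_le_one (x : ℝ) : |Real.tanh x| ≤ 1 := by
  rw [Real.tanh_eq_sinh_div_cosh, abs_div, abs_of_pos (Real.cosh_pos x)]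
  rw [div_le_one (Real.cosh_pos x)]
  nlinarith [Real.cosh_sq_sub_sinh_sq x, abs_nonneg (Real.sinh x), sq_abs (Real.sinh x),
    Real.cosh_pos x]

lemma iteratedDeriv_tanh (m : ℕ) :
    iteratedDeriv m Real.tanh
      = fun x => ∑ j ∈ Finset.range (m+2), (tc m j : ℝ) * Real.tanh x ^ j := by
  induction m with
  | zero =>
    funext x
    simp [tc, Finset.sum_range_succ]
  | succ m ih =>
    funext x
    rw [iteratedDeriv_succ, ih]
    set t := Real.tanh x with ht
    have hF : HasDerivAt (fun x => ∑ j ∈ Finset.range (m+2), (tc m j : ℝ) * Real.tanh x ^ j)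
        (∑ j ∈ Finset.range (m+2), (tc m j : ℝ) * ((j : ℝ) * t ^ (j-1) * (1 - t ^ 2))) x := by
      apply HasDerivAt.fun_sum
      intro j _
      exact ((hasDerivAt_tanh x).pow j).const_mul _
    rw [hF.deriv]
    have step1 : ∑ j ∈ Finset.range (m+2), (tc m j : ℝ) * ((j : ℝ) * t ^ (j-1) * (1 - t ^ 2))
        = (∑ j ∈ Finset.range (m+2), (tc m j : ℝ) * ((j:ℝ) * t ^ (j-1)))
          - ∑ j ∈ Finset.range (m+2), (tc m j : ℝ) * ((j:ℝ) * t ^ (j+1)) := by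
      rw [← Finset.sum_sub_distrib]
      apply Finset.sum_congr rfl
      intro j _
      rcases j with _ | j
      · simp
      · have : t ^ (j + 1 - 1) = t ^ j := by norm_num
        rw [this]
        ring
    rw [step1]
    have rhs : ∑ j ∈ Finset.range (m+3), (tc (m+1) j : ℝ) * t ^ j
        = (∑ j ∈ Finset.range (m+3), (((j:ℝ)+1) * (tc m (j+1) : ℝ)) * t ^ j)
          - ∑ j ∈ Finset.range (m+3), (((j-1 : ℕ) : ℝ) * (tc m (j-1) : ℝ)) * t ^ j := by
      rw [← Finset.sum_sub_distrib]
      apply Finset.sum_congr rfl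
      intro j _
      show ((tc (m+1) j : ℤ) : ℝ) * t ^ j = _
      rw [tc]
      push_cast
      ring
    rw [rhs]
    have key1 : ∑ j ∈ Finset.range (m+3), (((j:ℝ)+1) * (tc m (j+1) : ℝ)) * t ^ j
        = ∑ j ∈ Finset.range (m+2), (tc m j : ℝ) * ((j:ℝ) * t ^ (j-1)) := by
      rw [Finset.sum_range_succ (fun j => (((j:ℝ)+1) * (tc m (j+1) : ℝ)) * t ^ j) (m+2),
        tc_zero_of_big m (m+3) (by omega),
        Finset.sum_range_succ (fun j => (((j:ℝ)+1) * (tc m (j+1) : ℝ)) * t ^ j) (m+1),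
        tc_zero_of_big m (m+2) (by omega),
        Finset.sum_range_succ' (fun j => (tc m j : ℝ) * ((j:ℝ) * t ^ (j-1))) (m+1)]
      push_cast
      rw [Finset.sum_congr rfl (fun j _ => by ring :
        ∀ j ∈ Finset.range (m+1), ((tc m (j+1) : ℝ) * (((j:ℝ)+1) * t ^ j))
          = (((j:ℝ)+1) * (tc m (j+1) : ℝ)) * t ^ j)]
      ring
    have key2 : ∑ j ∈ Finset.range (m+3), (((j-1 : ℕ) : ℝ) * (tc m (j-1) : ℝ)) * t ^ j
        = ∑ j ∈ Finset.range (m+2), (tc m j : ℝ) * ((j:ℝ) * t ^ (j+1)) := by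
      rw [Finset.sum_range_succ' (fun j => (((j-1 : ℕ) : ℝ) * (tc m (j-1) : ℝ)) * t ^ j) (m+2)]
      have h0 : (((0:ℕ) - 1 : ℕ) : ℝ) * (tc m ((0:ℕ)-1) : ℝ) * t ^ (0:ℕ) = 0 := by
        norm_num
      rw [h0, add_zero]
      apply Finset.sum_congr rfl
      intro j _
      have hje : j + 1 - 1 = j := by omega
      rw [hje]
      push_cast
      ring
    rw [key1, key2]

/-! ### Consequences of the identity -/

noncomputable def tBnd (m : ℕ) : ℝ := ∑ j ∈ Finset.range (m+2), |(tc m j : ℝ)|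

lemma tBnd_nonneg (m : ℕ) : 0 ≤ tBnd m :=
  Finset.sum_nonneg fun _ _ => abs_nonneg _

lemma abs_iteratedDeriv_tanh_le (m : ℕ) (x : ℝ) :
    |iteratedDeriv m Real.tanh x| ≤ tBnd m := by
  rw [iteratedDeriv_tanh]
  refine (Finset.abs_sum_le_sum_abs _ _).trans ?_
  apply Finset.sum_le_sum
  intro j _
  rw [abs_mul, abs_pow]
  calc |(tc m j : ℝ)| * |Real.tanh x| ^ j ≤ |(tc m j : ℝ)| * 1 := by
        apply mul_le_mul_of_nonneg_left _ (abs_nonneg _)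
        exact pow_le_one₀ (abs_nonneg _) (abs_tanh_le_one x)
    _ = |(tc m j : ℝ)| := mul_one _

lemma contDiff_iteratedDeriv_tanh (m : ℕ) : ContDiff ℝ ⊤ (iteratedDeriv m Real.tanh) := by
  rw [iteratedDeriv_tanh]
  apply ContDiff.sum
  intro j _
  exact contDiff_const.mul (contDiff_tanh.pow j)

lemma iteratedDeriv_iteratedDeriv (l m : ℕ) (f : ℝ → ℝ) :
    iteratedDeriv l (iteratedDeriv m f) = iteratedDeriv (m + l) f := by
  simp only [iteratedDeriv_eq_iterate]
  rw [add_comm, Function.iterate_add_apply]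

lemma tanh_deriv_at_zero (m : ℕ) : iteratedDeriv m Real.tanh 0 = (tc m 0 : ℝ) := by
  rw [iteratedDeriv_tanh]
  simp only [Real.tanh_zero]
  rw [Finset.sum_eq_single 0]
  · norm_num
  · intro j _ hj
    rw [zero_pow hj, mul_zero]
  · intro h; simp at h

lemma tanh_even_deriv_zero (j : ℕ) (hj : j % 2 = 0) : iteratedDeriv j Real.tanh 0 = 0 := by
  have h1 : (fun x : ℝ => Real.tanh (-x)) = fun x => -Real.tanh x := by
    funext x; exact Real.tanh_neg x
  have h2 := iteratedDeriv_comp_neg j Real.tanh 0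
  rw [h1] at h2
  rw [iteratedDeriv_fun_neg] at h2
  rw [neg_zero] at h2
  have hpow : ((-1 : ℝ)) ^ j = 1 := Even.neg_one_pow (Nat.even_iff.2 hj)
  rw [hpow, one_smul] at h2
  linarith [h2]

def sg (m j : ℕ) : ℤ := (-1)^((m + j - 1)/2)

lemma tc_sign : ∀ m : ℕ, (∀ j, (m+j) % 2 = 0 → tc m j = 0) ∧
    (∀ j, (m+j) % 2 = 1 → 0 ≤ sg m j * tc m j ∧ (j ≤ m+1 → 0 < sg m j * tc m j)) := by
  intro m
  induction m with
  | zero =>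
    constructor
    · intro j hj; show (if j = 1 then (1:ℤ) else 0) = 0; rw [if_neg (by omega)]
    · intro j hj
      rcases eq_or_ne j 1 with rfl | hne
      · constructor
        · show (0:ℤ) ≤ sg 0 1 * (if (1:ℕ) = 1 then (1:ℤ) else 0); norm_num [sg]
        · intro _; show (0:ℤ) < sg 0 1 * (if (1:ℕ) = 1 then (1:ℤ) else 0); norm_num [sg]
      · have hz : tc 0 j = 0 := by show (if j = 1 then (1:ℤ) else 0) = 0; rw [if_neg hne]
        rw [hz]
        constructor
        · simp
        · intro hle; omega
  | succ m ih =>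
    obtain ⟨ihz, ihp⟩ := ih
    constructor
    · intro j hj
      show ((j:ℤ)+1) * tc m (j+1) - ((j-1 : ℕ) : ℤ) * tc m (j-1) = 0
      rw [ihz (j+1) (by omega)]
      rcases Nat.eq_zero_or_pos j with rfl | hjpos
      · norm_num
      · rw [ihz (j-1) (by omega)]; ring
    · intro j hj
      have hsg1 : sg (m+1) j = sg m (j+1) := by
        unfold sg; congr 1; omega
      have htc : tc (m+1) j = ((j:ℤ)+1) * tc m (j+1) - ((j-1 : ℕ) : ℤ) * tc m (j-1) := rfl
      rcases Nat.eq_zero_or_pos j with rfl | hjpos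
      · have he : sg (m+1) 0 * tc (m+1) 0 = sg m 1 * tc m 1 := by
          rw [htc, hsg1]
          norm_num
        rw [he]
        have := ihp 1 (by omega)
        exact ⟨(this.1), fun _ => this.2 (by omega)⟩
      · have hsg2 : sg m (j-1) = -sg m (j+1) := by
          unfold sg
          have h1 : (m + (j+1) - 1)/2 = (m + (j-1) - 1)/2 + 1 := by omega
          rw [h1, pow_succ]; ring
        have key : sg (m+1) j * tc (m+1) j
            = ((j:ℤ)+1) * (sg m (j+1) * tc m (j+1))
              + ((j-1 : ℕ) : ℤ) * (sg m (j-1) * tc m (j-1)) := by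
          rw [htc, hsg1, hsg2]; ring
        have hp1 := ihp (j+1) (by omega)
        have hp2 := ihp (j-1) (by omega)
        have hc1 : (0:ℤ) ≤ ((j:ℤ)+1) := by positivity
        have hc2 : (0:ℤ) ≤ ((j-1 : ℕ) : ℤ) := Int.natCast_nonneg _
        constructor
        · rw [key]
          exact add_nonneg (mul_nonneg hc1 hp1.1) (mul_nonneg hc2 hp2.1)
        · intro hle
          rw [key]
          rcases Nat.lt_or_ge j (m+1) with hlt | hge
          · apply add_pos_of_pos_of_nonneg
            · exact mul_pos (by positivity) (hp1.2 (by omega))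
            · exact mul_nonneg hc2 hp2.1
          · have hj2 : j = m + 2 := by omega
            apply add_pos_of_nonneg_of_pos
            · exact mul_nonneg hc1 hp1.1
            · apply mul_pos
              · omega
              · exact hp2.2 (by omega)

lemma tc_zero_ne (m : ℕ) (hm : m % 2 = 1) : tc m 0 ≠ 0 := by
  have := (tc_sign m).2 0 (by omega)
  have hpos := this.2 (by omega)
  intro h
  rw [h, mul_zero] at hpos
  exact lt_irrefl 0 hpos

lemma tanh_odd_deriv_ne_zero (m : ℕ) (hm : m % 2 = 1) :
    iteratedDeriv m Real.tanh 0 ≠ 0 := by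
  rw [tanh_deriv_at_zero]
  exact_mod_cast tc_zero_ne m hm

/-! ### Calculus helper lemmas -/

lemma itDW_eq {f : ℝ → ℝ} (hf : ContDiff ℝ ⊤ f) {s : Set ℝ} (hs : UniqueDiffOn ℝ s)
    {x : ℝ} (hx : x ∈ s) (n : ℕ) : iteratedDerivWithin n f s x = iteratedDeriv n f x := by
  rw [iteratedDerivWithin_eq_iteratedFDerivWithin, iteratedDeriv_eq_iteratedFDeriv]
  congr 1
  have h1 : HasFTaylorSeriesUpTo (⊤ : ℕ∞) f (ftaylorSeries ℝ f) :=
    contDiff_iff_ftaylorSeries.mp (hf.of_le le_top)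
  have h2 : HasFTaylorSeriesUpToOn (⊤ : ℕ∞) f (ftaylorSeries ℝ f) s :=
    h1.hasFTaylorSeriesUpToOn s
  exact (h2.eq_iteratedFDerivWithin_of_uniqueDiffOn (mod_cast le_top) hs hx).symm

lemma iteratedDeriv_zero_fun (m : ℕ) : iteratedDeriv m (fun _ : ℝ => (0:ℝ)) = fun _ => 0 := by
  induction m with
  | zero => funext x; simp
  | succ m ih => funext x; rw [iteratedDeriv_succ, ih]; simp

lemma iteratedDeriv_add' {f g : ℝ → ℝ} (hf : ContDiff ℝ ⊤ f) (hg : ContDiff ℝ ⊤ g)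
    (m : ℕ) (x : ℝ) : iteratedDeriv m (fun y => f y + g y) x
      = iteratedDeriv m f x + iteratedDeriv m g x := by
  have := iteratedDerivWithin_add (n := m) (Set.mem_univ x) uniqueDiffOn_univ
    ((hf.of_le le_top).contDiffWithinAt) ((hg.of_le le_top).contDiffWithinAt)
  simpa [iteratedDerivWithin_univ, Pi.add_def] using this

lemma iteratedDeriv_sub' {f g : ℝ → ℝ} (hf : ContDiff ℝ ⊤ f) (hg : ContDiff ℝ ⊤ g)
    (m : ℕ) (x : ℝ) : iteratedDeriv m (fun y => f y - g y) x
      = iteratedDeriv m f x - iteratedDeriv m g x := by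
  have := iteratedDerivWithin_sub (n := m) (Set.mem_univ x) uniqueDiffOn_univ
    ((hf.of_le le_top).contDiffWithinAt) ((hg.of_le le_top).contDiffWithinAt)
  simpa [iteratedDerivWithin_univ, Pi.sub_def] using this

lemma iteratedDeriv_cmul' {f : ℝ → ℝ} (hf : ContDiff ℝ ⊤ f) (c : ℝ)
    (m : ℕ) (x : ℝ) : iteratedDeriv m (fun y => c * f y) x = c * iteratedDeriv m f x := by
  have := iteratedDerivWithin_const_mul (n := m) (Set.mem_univ x) uniqueDiffOn_univ c
    ((hf.of_le le_top).contDiffWithinAt)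
  simpa [iteratedDerivWithin_univ] using this

lemma iteratedDeriv_fsum {ι : Type*} (t : Finset ι) (F : ι → ℝ → ℝ)
    (hF : ∀ i ∈ t, ContDiff ℝ ⊤ (F i)) (m : ℕ) (x : ℝ) :
    iteratedDeriv m (fun y => ∑ i ∈ t, F i y) x = ∑ i ∈ t, iteratedDeriv m (F i) x := by
  classical
  induction t using Finset.induction with
  | empty => simp [iteratedDeriv_zero_fun]
  | insert _ _ hnotmem =>
    rename_i a t' ih
    rw [Finset.sum_insert hnotmem]
    have h1 : ContDiff ℝ ⊤ (F a) := hF a (Finset.mem_insert_self a t')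
    have h2 : ContDiff ℝ ⊤ (fun y => ∑ i ∈ t', F i y) :=
      ContDiff.sum fun i hi => hF i (Finset.mem_insert_of_mem hi)
    have hfe : (fun y => F a y + ∑ i ∈ t', F i y) = fun y => ∑ i ∈ insert a t', F i y := by
      funext y; rw [Finset.sum_insert hnotmem]
    rw [← hfe, iteratedDeriv_add' h1 h2, ih (fun i hi => hF i (Finset.mem_insert_of_mem hi))]

lemma iteratedDeriv_scaled {f : ℝ → ℝ} (hf : ContDiff ℝ ⊤ f) (a b : ℝ) (m : ℕ) (x : ℝ) :
    iteratedDeriv m (fun y => a * f (b * y)) x = a * (b ^ m * iteratedDeriv m f (b * x)) := by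
  have hg : ContDiff ℝ ⊤ (fun y => f (b * y)) := hf.comp (contDiff_const.mul contDiff_id)
  rw [iteratedDeriv_cmul' hg a m x]
  congr 1
  have := iteratedDeriv_comp_const_mul (hf.of_le (le_top : ((m:ℕ) : WithTop ℕ∞) ≤ ⊤)) b (f := f)
  rw [this]

lemma iteratedDeriv_pow' (p : ℕ) : ∀ (m : ℕ),
    iteratedDeriv m (fun y : ℝ => y ^ p) = fun x => (p.descFactorial m : ℝ) * x ^ (p - m) := by
  intro m
  induction m with
  | zero => funext x; simp
  | succ m ih =>
    funext x
    rw [iteratedDeriv_succ, ih]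
    have hd : deriv (fun x : ℝ => (p.descFactorial m : ℝ) * x ^ (p - m)) x
        = (p.descFactorial m : ℝ) * ((p - m : ℕ) * x ^ (p - m - 1)) := by
      rw [deriv_const_mul _ (differentiableAt_pow _)]
      rw [deriv_pow_field]
    rw [hd, Nat.descFactorial_succ]
    have : p - (m + 1) = p - m - 1 := by omega
    rw [this]
    push_cast
    ring

lemma taylor_bound_nonneg {f : ℝ → ℝ} (hf : ContDiff ℝ ⊤ f) (N : ℕ) (C : ℝ)
    (hC : ∀ y : ℝ, |iteratedDeriv (N+1) f y| ≤ C) {x : ℝ} (hx : 0 ≤ x) :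
    |f x - ∑ l ∈ Finset.range (N+1), iteratedDeriv l f 0 * x ^ l / (l.factorial : ℝ)|
      ≤ C * |x| ^ (N+1) / (N.factorial : ℝ) := by
  have hC0 : 0 ≤ C := le_trans (abs_nonneg _) (hC 0)
  rcases eq_or_lt_of_le hx with rfl | hxpos
  · have hsum : ∑ l ∈ Finset.range (N+1), iteratedDeriv l f 0 * (0:ℝ) ^ l / (l.factorial : ℝ)
        = f 0 := by
      rw [Finset.sum_eq_single 0]
      · simp
      · intro l _ hl; rw [zero_pow hl]; simp
      · intro h; simp at h
    rw [hsum]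
    simp [Nat.factorial_pos]
  · have hud : UniqueDiffOn ℝ (Set.Icc (0:ℝ) x) := uniqueDiffOn_Icc hxpos
    have h0mem : (0:ℝ) ∈ Set.Icc (0:ℝ) x := by constructor <;> simp [hx]
    have hxmem : x ∈ Set.Icc (0:ℝ) x := by constructor <;> simp [hx]
    have hfon : ContDiffOn ℝ (N+1 : ℕ) f (Set.Icc 0 x) := (hf.of_le le_top).contDiffOn
    have hbound : ∀ y ∈ Set.Icc (0:ℝ) x,
        ‖iteratedDerivWithin (N+1) f (Set.Icc 0 x) y‖ ≤ C := by
      intro y hy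
      rw [Real.norm_eq_abs, itDW_eq hf hud hy]
      exact hC y
    have := taylor_mean_remainder_bound hx hfon hxmem hbound
    rw [Real.norm_eq_abs] at this
    have htay : taylorWithinEval f N (Set.Icc 0 x) 0 x
        = ∑ l ∈ Finset.range (N+1), iteratedDeriv l f 0 * x ^ l / (l.factorial : ℝ) := by
      rw [taylor_within_apply]
      apply Finset.sum_congr rfl
      intro l _
      rw [itDW_eq hf hud h0mem]
      rw [smul_eq_mul]
      rw [sub_zero]
      ring
    rw [htay] at this
    rw [abs_of_nonneg hx]
    simpa using this

lemma taylor_bound_global {f : ℝ → ℝ} (hf : ContDiff ℝ ⊤ f) (N : ℕ) (C : ℝ)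
    (hC : ∀ y : ℝ, |iteratedDeriv (N+1) f y| ≤ C) (x : ℝ) :
    |f x - ∑ l ∈ Finset.range (N+1), iteratedDeriv l f 0 * x ^ l / (l.factorial : ℝ)|
      ≤ C * |x| ^ (N+1) / (N.factorial : ℝ) := by
  rcases le_or_gt 0 x with hx | hx
  · exact taylor_bound_nonneg hf N C hC hx
  · set g : ℝ → ℝ := fun u => f (-u) with hg
    have hgc : ContDiff ℝ ⊤ g := hf.comp contDiff_neg
    have hgC : ∀ y : ℝ, |iteratedDeriv (N+1) g y| ≤ C := by
      intro y
      rw [hg]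
      rw [iteratedDeriv_comp_neg]
      rw [smul_eq_mul, abs_mul, abs_pow, abs_neg, abs_one, one_pow, one_mul]
      exact hC (-y)
    have hxn : 0 ≤ -x := by linarith
    have := taylor_bound_nonneg hgc N C hgC hxn
    have hgx : g (-x) = f x := by rw [hg]; simp
    have hsum : ∑ l ∈ Finset.range (N+1), iteratedDeriv l g 0 * (-x) ^ l / (l.factorial : ℝ)
        = ∑ l ∈ Finset.range (N+1), iteratedDeriv l f 0 * x ^ l / (l.factorial : ℝ) := by
      apply Finset.sum_congr rfl
      intro l _
      have h1 : iteratedDeriv l g 0 = (-1:ℝ)^l * iteratedDeriv l f 0 := by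
        rw [hg, iteratedDeriv_comp_neg, neg_zero, smul_eq_mul]
      rcases Nat.even_or_odd l with he | ho
      · rw [h1, he.neg_one_pow, one_mul, he.neg_pow]
      · rw [h1, ho.neg_one_pow, ho.neg_pow]; ring
    rw [hgx, hsum, abs_neg] at this
    exact this

/-! ### Vandermonde weights -/

lemma exists_weights (n : ℕ) (β : Fin n → ℝ) :
    ∃ w : Fin n → Fin n → ℝ, ∀ r r' : Fin n,
      ∑ i, w r i * ((i:ℝ)+1)^(2*(r':ℕ)+1) = if r' = r then β r else 0 := by
  classical
  set c : Fin n → ℝ := fun i => (i:ℝ)+1 with hc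
  have hcpos : ∀ i, 0 < c i := fun i => by positivity
  set A : Matrix (Fin n) (Fin n) ℝ := fun r' i => c i ^ (2*(r':ℕ)+1) with hA
  have hdet : A.det ≠ 0 := by
    have hAeq : A = (Matrix.diagonal c * Matrix.vandermonde (fun i => c i ^ 2)).transpose := by
      ext r' i
      simp [hA, Matrix.vandermonde, Matrix.mul_apply, Matrix.diagonal, Matrix.transpose]
      rw [pow_add, pow_mul, pow_one, mul_comm]
    rw [hAeq, Matrix.det_transpose, Matrix.det_mul, Matrix.det_diagonal]
    apply mul_ne_zero
    · exact Finset.prod_ne_zero_iff.mpr fun i _ => (hcpos i).ne'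
    · rw [Matrix.det_vandermonde_ne_zero_iff]
      intro i j hij
      have hi := hcpos i; have hj := hcpos j
      simp only at hij
      have : c i = c j := by nlinarith [hij, sq_nonneg (c i - c j), sq_nonneg (c i + c j)]
      have : (i:ℝ) = (j:ℝ) := by simpa [hc] using this
      exact Fin.ext (by exact_mod_cast this)
  have hunit : IsUnit A.det := isUnit_iff_ne_zero.mpr hdet
  refine ⟨fun r => (A⁻¹).mulVec (fun r' => if r' = r then β r else 0), fun r r' => ?_⟩
  have : A.mulVec ((A⁻¹).mulVec (fun r' => if r' = r then β r else 0))
      = (fun r' => if r' = r then β r else 0) := by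
    rw [Matrix.mulVec_mulVec, Matrix.mul_nonsing_inv A hunit, Matrix.one_mulVec]
  have h2 := congrFun this r'
  rw [Matrix.mulVec, dotProduct] at h2
  simpa [hA, mul_comm] using h2

/-! ### Main estimate -/


lemma main_est (n k s p m : ℕ) (hp : p ≤ s) (hm : m ≤ k)
    (M Mx Btot h : ℝ) (hMxM : M ≤ Mx) (hMx1 : 1 ≤ Mx) (hn1 : 1 ≤ n)
    (hBle : ∀ j ≤ k+s+1, tBnd j ≤ Btot) (hBtot0 : 0 ≤ Btot)
    (hh0 : 0 < h) (hh1 : h ≤ 1)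
    (ww : Fin n → ℝ)
    (hww : ∀ j, j ≤ s → (iteratedDeriv j Real.tanh 0) * (∑ i, ww i * ((i:ℝ)+1) ^ j)
        = if j = p then (p.factorial : ℝ) else 0)
    (x : ℝ) (hx : |x| ≤ M) :
    |iteratedDeriv m (fun y => y ^ p - ∑ i, (ww i / h ^ p) * Real.tanh (((i:ℝ)+1) * h * y)) x|
      ≤ (∑ i, |ww i|) * (Btot * (n:ℝ)^(k+s+2) * Mx^(k+s+2) * h) := by
  classical
  have hhne : h ≠ 0 := hh0.ne'
  have hM0 : 0 ≤ M := le_trans (abs_nonneg x) hx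
  set tv : ℕ → ℝ := fun j => iteratedDeriv j Real.tanh 0 with htv
  set T : ℝ → ℝ := iteratedDeriv m Real.tanh with hT
  have hcT : ContDiff ℝ ⊤ T := contDiff_iteratedDeriv_tanh m
  set q' : ℕ := s + 1 - m with hq'
  set S : ℝ → ℝ := fun z => ∑ l ∈ Finset.range q', tv (m+l) * z ^ l / (l.factorial : ℝ)
    with hS
  have hSeq : ∀ z, S z = ∑ l ∈ Finset.range q', tv (m+l) * z ^ l / (l.factorial : ℝ) := by
    intro z; rfl
  -- contDiff facts
  have hcterm : ∀ i : Fin n, ContDiff ℝ ⊤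
      (fun y => (ww i / h ^ p) * Real.tanh (((i:ℝ)+1) * h * y)) := fun i =>
    contDiff_const.mul (contDiff_tanh.comp (contDiff_const.mul contDiff_id))
  have hcpsi : ContDiff ℝ ⊤ (fun y => ∑ i, (ww i / h ^ p) * Real.tanh (((i:ℝ)+1) * h * y)) :=
    ContDiff.sum fun i _ => hcterm i
  have hcpow : ContDiff ℝ ⊤ (fun y : ℝ => y ^ p) := contDiff_id.pow p
  -- Step A : compute the iterated derivative
  have hA : iteratedDeriv m
        (fun y => y ^ p - ∑ i, (ww i / h ^ p) * Real.tanh (((i:ℝ)+1) * h * y)) x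
      = (p.descFactorial m : ℝ) * x ^ (p - m)
        - ∑ i, (ww i / h ^ p) * ((((i:ℝ)+1) * h) ^ m * T ((((i:ℝ)+1) * h) * x)) := by
    rw [iteratedDeriv_sub' hcpow hcpsi]
    congr 1
    · rw [iteratedDeriv_pow']
    · rw [iteratedDeriv_fsum Finset.univ _ (fun i _ => hcterm i)]
      apply Finset.sum_congr rfl
      intro i _
      exact iteratedDeriv_scaled contDiff_tanh (ww i / h ^ p) (((i:ℝ)+1) * h) m x
  -- Step B : Taylor remainder bound
  have hTS : ∀ z : ℝ, |T z - S z| ≤ Btot * |z| ^ q' := by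
    intro z
    rcases le_or_gt m s with hms | hms
    · have hq : q' = (s - m) + 1 := by omega
      have hC : ∀ y : ℝ, |iteratedDeriv ((s-m)+1) T y| ≤ tBnd (s+1) := by
        intro y
        rw [hT, iteratedDeriv_iteratedDeriv]
        have he : m + ((s-m)+1) = s+1 := by omega
        rw [he]
        exact abs_iteratedDeriv_tanh_le (s+1) y
      have htb := taylor_bound_global hcT (s-m) _ hC z
      have hsum : ∑ l ∈ Finset.range ((s-m)+1), iteratedDeriv l T 0 * z ^ l / (l.factorial:ℝ)
          = S z := by
        rw [hSeq, hq]
        apply Finset.sum_congr rfl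
        intro l _
        rw [hT, iteratedDeriv_iteratedDeriv]
      rw [hsum] at htb
      refine htb.trans ?_
      rw [hq]
      have h1 : tBnd (s+1) * |z| ^ ((s-m)+1) / ((s-m).factorial : ℝ)
          ≤ tBnd (s+1) * |z| ^ ((s-m)+1) := by
        apply div_le_self (mul_nonneg (tBnd_nonneg _) (pow_nonneg (abs_nonneg _) _))
          (by exact_mod_cast (s-m).factorial_pos)
      refine h1.trans ?_
      apply mul_le_mul_of_nonneg_right (hBle (s+1) (by omega)) (by positivity)
    · have hq0 : q' = 0 := by omega
      have hS0 : S z = 0 := by rw [hSeq, hq0]; simp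
      rw [hS0, sub_zero, hq0, pow_zero, mul_one]
      exact (abs_iteratedDeriv_tanh_le m z).trans (hBle m (by omega))
  -- Step C : the Taylor polynomial part sums exactly to the monomial derivative
  have hmain : ∑ i, (ww i / h ^ p) * ((((i:ℝ)+1) * h) ^ m * S ((((i:ℝ)+1) * h) * x))
      = (p.descFactorial m : ℝ) * x ^ (p - m) := by
    have step1 : ∀ i : Fin n, (ww i / h ^ p) * ((((i:ℝ)+1) * h) ^ m * S ((((i:ℝ)+1) * h) * x))
        = ∑ l ∈ Finset.range q',
            (h^(m+l) * (h^p)⁻¹ * (x^l / (l.factorial:ℝ)))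
              * (tv (m+l) * (ww i * ((i:ℝ)+1)^(m+l))) := by
      intro i
      rw [hSeq, Finset.mul_sum, Finset.mul_sum]
      apply Finset.sum_congr rfl
      intro l _
      rw [div_eq_mul_inv, mul_pow ((i:ℝ)+1) h m, mul_pow (((i:ℝ)+1)*h) x l,
        mul_pow ((i:ℝ)+1) h l, pow_add ((i:ℝ)+1) m l, pow_add h m l]
      ring
    rw [Finset.sum_congr rfl (fun i _ => step1 i), Finset.sum_comm]
    have step2 : ∀ l ∈ Finset.range q',
        (∑ i : Fin n, (h^(m+l) * (h^p)⁻¹ * (x^l / (l.factorial:ℝ)))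
            * (tv (m+l) * (ww i * ((i:ℝ)+1)^(m+l))))
        = (h^(m+l) * (h^p)⁻¹ * (x^l / (l.factorial:ℝ)))
            * (if m + l = p then (p.factorial:ℝ) else 0) := by
      intro l hl
      have hls : m + l ≤ s := by have := Finset.mem_range.mp hl; omega
      rw [← Finset.mul_sum]
      congr 1
      rw [← Finset.mul_sum]
      exact hww (m+l) hls
    rw [Finset.sum_congr rfl step2]
    rcases le_or_gt m p with hmp | hpm
    · rw [Finset.sum_eq_single_of_mem (p - m) (Finset.mem_range.mpr (by omega))]
      · rw [if_pos (by omega)]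
        have he1 : m + (p - m) = p := by omega
        rw [he1, mul_inv_cancel₀ (pow_ne_zero p hhne), one_mul]
        have hfd : ((p - m).factorial : ℝ) * (p.descFactorial m : ℝ) = (p.factorial : ℝ) := by
          exact_mod_cast congrArg (Nat.cast (R := ℝ)) (Nat.factorial_mul_descFactorial hmp)
        have hfne : ((p-m).factorial : ℝ) ≠ 0 := Nat.cast_ne_zero.mpr (Nat.factorial_ne_zero _)
        rw [div_mul_eq_mul_div, div_eq_iff hfne]
        linear_combination (-(x^(p-m))) * hfd
      · intro l _ hne
        rw [if_neg (by omega), mul_zero]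
    · rw [Finset.sum_eq_zero (fun l _ => by rw [if_neg (by omega), mul_zero])]
      have hd0 : p.descFactorial m = 0 := Nat.descFactorial_eq_zero_iff_lt.mpr hpm
      rw [hd0]
      norm_num
  -- Step D : final bound
  rw [hA, ← hmain, ← Finset.sum_sub_distrib]
  have hre : ∀ i : Fin n,
      (ww i / h ^ p) * ((((i:ℝ)+1) * h) ^ m * S ((((i:ℝ)+1) * h) * x))
        - (ww i / h ^ p) * ((((i:ℝ)+1) * h) ^ m * T ((((i:ℝ)+1) * h) * x))
      = (ww i / h ^ p) * ((((i:ℝ)+1) * h) ^ m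
          * (S ((((i:ℝ)+1) * h) * x) - T ((((i:ℝ)+1) * h) * x))) := by
    intro i; ring
  rw [Finset.sum_congr rfl (fun i _ => hre i)]
  refine (Finset.abs_sum_le_sum_abs _ _).trans ?_
  have hterm : ∀ i : Fin n,
      |(ww i / h ^ p) * ((((i:ℝ)+1) * h) ^ m
          * (S ((((i:ℝ)+1) * h) * x) - T ((((i:ℝ)+1) * h) * x)))|
      ≤ |ww i| * (Btot * (n:ℝ)^(k+s+2) * Mx^(k+s+2) * h) := by
    intro i
    set b : ℝ := ((i:ℝ)+1) * h with hb
    have hipos : (0:ℝ) < (i:ℝ)+1 := by positivity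
    have hbpos : 0 < b := mul_pos hipos hh0
    have hccn : ((i:ℝ)+1) ≤ (n:ℝ) := by
      have : (i:ℕ) + 1 ≤ n := i.isLt
      exact_mod_cast this
    have hn1' : (1:ℝ) ≤ (n:ℝ) := by exact_mod_cast hn1
    have hzb : |b * x| ≤ b * Mx := by
      rw [abs_mul, abs_of_pos hbpos]
      exact mul_le_mul_of_nonneg_left (hx.trans hMxM) hbpos.le
    have h1 : |S (b * x) - T (b * x)| ≤ Btot * (b * Mx) ^ q' := by
      rw [abs_sub_comm]
      refine (hTS (b * x)).trans ?_
      exact mul_le_mul_of_nonneg_left (pow_le_pow_left₀ (abs_nonneg _) hzb q') hBtot0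
    have habs : |(ww i / h ^ p) * (b ^ m * (S (b * x) - T (b * x)))|
        = (|ww i| / h ^ p) * (b ^ m * |S (b * x) - T (b * x)|) := by
      rw [abs_mul, abs_mul, abs_div, abs_pow, abs_pow, abs_of_pos hh0, abs_of_pos hbpos]
    rw [habs]
    have h2 : (|ww i| / h ^ p) * (b ^ m * |S (b * x) - T (b * x)|)
        ≤ (|ww i| / h ^ p) * (b ^ m * (Btot * (b * Mx) ^ q')) := by
      apply mul_le_mul_of_nonneg_left _ (by positivity)
      exact mul_le_mul_of_nonneg_left h1 (by positivity)
    refine h2.trans ?_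
    have heq : (|ww i| / h ^ p) * (b ^ m * (Btot * (b * Mx) ^ q'))
        = |ww i| * Btot * (((i:ℝ)+1)^(m+q') * Mx^q' * (h^(m+q') * (h^p)⁻¹)) := by
      rw [hb, div_eq_mul_inv]
      rw [mul_pow ((i:ℝ)+1) h m, mul_pow (((i:ℝ)+1)*h) Mx q', mul_pow ((i:ℝ)+1) h q',
        pow_add ((i:ℝ)+1) m q', pow_add h m q']
      ring
    rw [heq]
    have hple : p + 1 ≤ m + q' := by omega
    have hmqle : m + q' ≤ k + s + 2 := by omega
    have e1 : h^(m+q') * (h^p)⁻¹ = h^(m+q'-p) :=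
      (pow_sub₀ h hhne (by omega)).symm
    have e2 : h^(m+q'-p) ≤ h := by
      calc h^(m+q'-p) ≤ h^1 := pow_le_pow_of_le_one hh0.le hh1 (by omega)
        _ = h := pow_one h
    have e3 : ((i:ℝ)+1)^(m+q') ≤ (n:ℝ)^(k+s+2) := by
      calc ((i:ℝ)+1)^(m+q') ≤ (n:ℝ)^(m+q') := pow_le_pow_left₀ hipos.le hccn _
        _ ≤ (n:ℝ)^(k+s+2) := pow_le_pow_right₀ hn1' hmqle
    have e4 : Mx^q' ≤ Mx^(k+s+2) := pow_le_pow_right₀ hMx1 (by omega)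
    have e5 : ((i:ℝ)+1)^(m+q') * Mx^q' * (h^(m+q') * (h^p)⁻¹)
        ≤ (n:ℝ)^(k+s+2) * Mx^(k+s+2) * h := by
      rw [e1]
      have hAB : ((i:ℝ)+1)^(m+q') * Mx^q' ≤ (n:ℝ)^(k+s+2) * Mx^(k+s+2) :=
        mul_le_mul e3 e4 (by positivity) (by positivity)
      exact mul_le_mul hAB e2 (pow_nonneg hh0.le _) (by positivity)
    calc |ww i| * Btot * (((i:ℝ)+1)^(m+q') * Mx^q' * (h^(m+q') * (h^p)⁻¹))
        ≤ |ww i| * Btot * ((n:ℝ)^(k+s+2) * Mx^(k+s+2) * h) :=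
          mul_le_mul_of_nonneg_left e5 (by positivity)
      _ = |ww i| * (Btot * (n:ℝ)^(k+s+2) * Mx^(k+s+2) * h) := by ring
  calc ∑ i, |(ww i / h ^ p) * ((((i:ℝ)+1) * h) ^ m
          * (S ((((i:ℝ)+1) * h) * x) - T ((((i:ℝ)+1) * h) * x)))|
      ≤ ∑ i, |ww i| * (Btot * (n:ℝ)^(k+s+2) * Mx^(k+s+2) * h) :=
        Finset.sum_le_sum fun i _ => hterm i
    _ = (∑ i, |ww i|) * (Btot * (n:ℝ)^(k+s+2) * Mx^(k+s+2) * h) := by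
        rw [Finset.sum_mul]


end NNAux

/-- **Lemma 3.1.** For `k ∈ ℕ₀`, odd `s` and `M > 0`: for every `ε > 0` there is a shallow
tanh neural network `Ψ : [-M,M] → ℝ^{(s+1)/2}` of width `(s+1)/2` such that for every odd
`p ≤ s`, `‖y ↦ y^p - Ψ_{(p+1)/2}(y)‖_{W^{k,∞}([-M,M])} ≤ ε`. -/
theorem shallow_tanh_approx_odd_monomials (k s : ℕ) (hs : s % 2 = 1)
    (M : ℝ) (hM : 0 < M) (ε : ℝ) (hε : 0 < ε) :
    ∃ Ψ : ℝ → Fin ((s + 1) / 2) → ℝ, IsShallowTanh1 ((s + 1) / 2) Ψ ∧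
      ∀ (p : ℕ) (hp : p ≤ s) (hodd : p % 2 = 1),
        sobNorm1 k (Set.Icc (-M) M) (fun y => y ^ p - Ψ y ⟨p / 2, by omega⟩) ≤ ε := by
  classical
  have hn1 : 1 ≤ (s + 1) / 2 := by omega
  set n := (s + 1) / 2 with hn
  set β : Fin n → ℝ :=
    fun r => ((2*(r:ℕ)+1).factorial : ℝ) / iteratedDeriv (2*(r:ℕ)+1) Real.tanh 0 with hβ
  obtain ⟨w, hw⟩ := NNAux.exists_weights n β
  set Mx : ℝ := max M 1 with hMx
  have hMx1 : (1:ℝ) ≤ Mx := le_max_right _ _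
  have hMxM : M ≤ Mx := le_max_left _ _
  set Btot : ℝ := ∑ j ∈ Finset.range (k+s+2), NNAux.tBnd j with hBtot
  have hBtot0 : 0 ≤ Btot := Finset.sum_nonneg fun j _ => NNAux.tBnd_nonneg j
  have hBle : ∀ j, j ≤ k+s+1 → NNAux.tBnd j ≤ Btot := fun j hj =>
    Finset.single_le_sum (f := fun i => NNAux.tBnd i)
      (fun i _ => NNAux.tBnd_nonneg i) (Finset.mem_range.mpr (by omega))
  set Wsum : ℝ := ∑ r : Fin n, ∑ i : Fin n, |w r i| with hWsum
  have hWle : ∀ r : Fin n, (∑ i, |w r i|) ≤ Wsum := fun r =>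
    Finset.single_le_sum (f := fun r' => ∑ i, |w r' i|)
      (fun r' _ => Finset.sum_nonneg fun i _ => abs_nonneg _) (Finset.mem_univ r)
  have hWs0 : 0 ≤ Wsum :=
    Finset.sum_nonneg fun r _ => Finset.sum_nonneg fun i _ => abs_nonneg _
  have hpw0 : (0:ℝ) ≤ Btot * (n:ℝ)^(k+s+2) * Mx^(k+s+2) :=
    mul_nonneg (mul_nonneg hBtot0 (pow_nonneg (Nat.cast_nonneg n) _))
      (pow_nonneg (by linarith) _)
  set C0 : ℝ := Wsum * (Btot * (n:ℝ)^(k+s+2) * Mx^(k+s+2)) + 1 with hC0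
  have hC0pos : 0 < C0 := by nlinarith
  set h : ℝ := min (ε / C0) 1 with hh
  have hhpos : 0 < h := lt_min (div_pos hε hC0pos) one_pos
  have hh1 : h ≤ 1 := min_le_right _ _
  have hCh : C0 * h ≤ ε := by
    have h1 : h ≤ ε / C0 := min_le_left _ _
    calc C0 * h ≤ C0 * (ε / C0) := mul_le_mul_of_nonneg_left h1 hC0pos.le
      _ = ε := mul_div_cancel₀ ε hC0pos.ne'
  refine ⟨fun y j => ∑ i, (w j i / h ^ (2*(j:ℕ)+1)) * Real.tanh (((i:ℝ)+1) * h * y),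
    ⟨fun i => ((i:ℝ)+1) * h, 0, fun j i => w j i / h ^ (2*(j:ℕ)+1), 0, ?_⟩, ?_⟩
  · intro x j
    simp
    rfl
  intro p hp hodd
  have hp2 : 2 * (p / 2) + 1 = p := by omega
  set r : Fin n := ⟨p / 2, by omega⟩ with hr
  have hrp : 2 * (r:ℕ) + 1 = p := hp2
  have htp : iteratedDeriv p Real.tanh 0 ≠ 0 := NNAux.tanh_odd_deriv_ne_zero p hodd
  have HG : ∀ j, j ≤ s → iteratedDeriv j Real.tanh 0 * (∑ i, w r i * ((i:ℝ)+1) ^ j)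
      = if j = p then (p.factorial : ℝ) else 0 := by
    intro j hj
    rcases Nat.even_or_odd j with hev | hod
    · have hevn : j % 2 = 0 := Nat.even_iff.mp hev
      rw [NNAux.tanh_even_deriv_zero j hevn, zero_mul, if_neg (by omega : j ≠ p)]
    · have hjodd : j % 2 = 1 := Nat.odd_iff.mp hod
      have hj2 : j / 2 < n := by omega
      have h2r' : 2 * ((⟨j/2, hj2⟩ : Fin n) : ℕ) + 1 = j := by
        show 2 * (j/2) + 1 = j
        omega
      have hwrr := hw r ⟨j/2, hj2⟩
      rw [h2r'] at hwrr
      rw [hwrr]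
      by_cases hrr : (⟨j/2, hj2⟩ : Fin n) = r
      · have hjp : j = p := by
          have hval := congrArg Fin.val hrr
          have : j / 2 = p / 2 := hval
          omega
        rw [if_pos hrr, if_pos hjp, hjp]
        simp only [hβ]
        rw [hrp]
        rw [mul_comm, div_mul_cancel₀ _ htp]
      · have hjp : j ≠ p := by
          intro hcon
          apply hrr
          apply Fin.ext
          show j / 2 = p / 2
          omega
        rw [if_neg hrr, if_neg hjp, mul_zero]
  have key : ∀ m, m ≤ k → ∀ x, x ∈ Set.Icc (-M) M →
      |iteratedDeriv m
        (fun y => y ^ p - ∑ i, (w r i / h ^ p) * Real.tanh (((i:ℝ)+1) * h * y)) x| ≤ ε := by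
    intro m hm x hx
    have hxM : |x| ≤ M := abs_le.mpr ⟨by linarith [hx.1], hx.2⟩
    have hme := NNAux.main_est n k s p m hp hm M Mx Btot h hMxM hMx1 hn1 hBle hBtot0
      hhpos hh1 (w r) HG x hxM
    refine hme.trans ?_
    have h1 : (∑ i, |w r i|) * (Btot * (n:ℝ)^(k+s+2) * Mx^(k+s+2) * h)
        ≤ Wsum * (Btot * (n:ℝ)^(k+s+2) * Mx^(k+s+2) * h) :=
      mul_le_mul_of_nonneg_right (hWle r) (mul_nonneg hpw0 hhpos.le)
    refine h1.trans ?_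
    have h2 : Wsum * (Btot * (n:ℝ)^(k+s+2) * Mx^(k+s+2) * h)
        = (Wsum * (Btot * (n:ℝ)^(k+s+2) * Mx^(k+s+2))) * h := by ring
    rw [h2]
    have h3 : (Wsum * (Btot * (n:ℝ)^(k+s+2) * Mx^(k+s+2))) * h ≤ C0 * h := by
      apply mul_le_mul_of_nonneg_right _ hhpos.le
      rw [hC0]
      linarith
    exact h3.trans hCh
  have hne : Nonempty {q : ℕ × ℝ // q.1 ≤ k ∧ q.2 ∈ Set.Icc (-M) M} :=
    ⟨⟨(0, M), ⟨Nat.zero_le _, ⟨by linarith, le_refl M⟩⟩⟩⟩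
  show sobNorm1 k (Set.Icc (-M) M)
      (fun y => y ^ p - ∑ i, (w r i / h ^ (2*(p/2)+1)) * Real.tanh (((i:ℝ)+1) * h * y)) ≤ ε
  rw [hp2, sobNorm1]
  exact ciSup_le fun q => key q.1.1 q.2.1 q.1.2 q.2.2
end
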